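/- arXiv:1403.2647 — 7 statements merged into one kernel-verified Lean document; each statement's English description precedes it below -/
import Mathlib

section
/- Let X be a real Banach space that does not have the Schur property. Then for every c > 0 and every R > 2 one has min{ η_X(c,R), R/2 − 1 } ≤ r_X(c). -/
open Filter Topology MeasureTheory
open scoped ENNReal ZeroAtInfty

noncomputable section

/-- A sequence in a Banach space is weakly null if `φ (x n) → 0` for every
continuous linear functional `φ`. -/
def WeaklyNull {X : Type*} [NormedAddCommGroup X] [NormedSpace ℝ X] (u : ℕ → X) : Prop :=
  ∀ φ : X →L[ℝ] ℝ, Tendsto (fun n => φ (u n)) atTop (𝓝 0)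

/-- The Schur property: every weakly null sequence converges to `0` in norm. -/
def SchurProperty (X : Type*) [NormedAddCommGroup X] [NormedSpace ℝ X] : Prop :=
  ∀ u : ℕ → X, WeaklyNull u → Tendsto (fun n => ‖u n‖) atTop (𝓝 0)

/-- The Opial modulus `r_X(c)`. -/
def opialModulus (X : Type*) [NormedAddCommGroup X] [NormedSpace ℝ X] (c : ℝ) : ℝ :=
  sInf { d : ℝ | ∃ (x : X) (u : ℕ → X), c ≤ ‖x‖ ∧ WeaklyNull u ∧
    1 ≤ liminf (fun n => ‖u n‖) atTop ∧
    d = liminf (fun n => ‖u n - x‖) atTop - 1 }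

/-- The modulus `η_X(ε, R)`. -/
def etaModulus (X : Type*) [NormedAddCommGroup X] [NormedSpace ℝ X] (ε R : ℝ) : ℝ :=
  sInf { d : ℝ | ∃ (x : X) (u : ℕ → X), ε ≤ ‖x‖ ∧ WeaklyNull u ∧
    limsup (fun n => ‖u n‖) atTop ≤ R ∧
    d = liminf (fun n => ‖u n - x‖) atTop - liminf (fun n => ‖u n‖) atTop }

/-- The García-Falset coefficient `R(X)`. -/
def garciaFalset (X : Type*) [NormedAddCommGroup X] [NormedSpace ℝ X] : ℝ :=
  sSup { a : ℝ | ∃ (x : X) (u : ℕ → X), ‖x‖ ≤ 1 ∧ (∀ n, ‖u n‖ ≤ 1) ∧ WeaklyNull u ∧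
    a = liminf (fun n => ‖u n + x‖) atTop }

/-- The degree of WORTHness `w(X)`. -/
def worthDegree (X : Type*) [NormedAddCommGroup X] [NormedSpace ℝ X] : ℝ :=
  sSup { r : ℝ | 0 ≤ r ∧ ∀ (x : X) (u : ℕ → X), WeaklyNull u →
    r * liminf (fun n => ‖u n + x‖) atTop ≤ liminf (fun n => ‖u n - x‖) atTop }

/-- Gao's modulus of u-convexity `u_X(ε)`. -/
def uModulus (X : Type*) [NormedAddCommGroup X] [NormedSpace ℝ X] (ε : ℝ) : ℝ :=
  sInf { d : ℝ | ∃ (x y : X) (φ : X →L[ℝ] ℝ), ‖x‖ = 1 ∧ ‖y‖ = 1 ∧ ‖φ‖ = 1 ∧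
    φ x = 1 ∧ φ y ≤ 1 - ε ∧ d = 1 - ‖(2⁻¹ : ℝ) • (x + y)‖ }

/-- The c₀-sum of a family of Banach spaces: the closure, inside the ℓ∞-sum, of the
set of finitely supported families. -/
def c0Sum {I : Type*} (X : I → Type*) [∀ i, NormedAddCommGroup (X i)]
    [∀ i, NormedSpace ℝ (X i)] : Submodule ℝ (lp X ∞) :=
  (Submodule.span ℝ { f : lp X ∞ | Set.Finite { i | (f : ∀ i, X i) i ≠ 0 } }).topologicalClosure

end

section Helpers
variable {X : Type*} [NormedAddCommGroup X] [NormedSpace ℝ X]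

lemma weaklyNull_bdd {u : ℕ → X} (hu : WeaklyNull u) : ∃ C : ℝ, 0 ≤ C ∧ ∀ n, ‖u n‖ ≤ C := by
  have h : ∀ φ : X →L[ℝ] ℝ, ∃ C, ∀ n,
      ‖(NormedSpace.inclusionInDoubleDualLi ℝ (E := X) (u n) : (X →L[ℝ] ℝ) →L[ℝ] ℝ) φ‖ ≤ C := by
    intro φ
    obtain ⟨C, hC⟩ := ((hu φ).norm.isBoundedUnder_le).bddAbove_range
    refine ⟨C, fun n => ?_⟩
    have : ‖φ (u n)‖ ≤ C := hC (Set.mem_range_self n)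
    simpa [NormedSpace.inclusionInDoubleDualLi] using this
  obtain ⟨C', hC'⟩ := banach_steinhaus h
  refine ⟨max C' 0, le_max_right _ _, fun n => ?_⟩
  have := (NormedSpace.inclusionInDoubleDualLi ℝ (E := X)).norm_map (u n)
  calc ‖u n‖ = _ := this.symm
    _ ≤ C' := hC' n
    _ ≤ max C' 0 := le_max_left _ _

/-- weak lower semicontinuity of the norm, for weakly null sequences -/
lemma norm_le_liminf_sub {u : ℕ → X} (hu : WeaklyNull u) (x : X) :
    ‖x‖ ≤ liminf (fun n => ‖u n - x‖) atTop := by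
  obtain ⟨C, hC0, hC⟩ := weaklyNull_bdd hu
  have hble : IsBoundedUnder (· ≤ ·) atTop (fun n => ‖u n - x‖) :=
    isBoundedUnder_of ⟨C + ‖x‖, fun n =>
      (norm_sub_le _ _).trans (add_le_add_left (hC n) _)⟩
  have hcob : IsCoboundedUnder (· ≥ ·) atTop (fun n => ‖u n - x‖) :=
    hble.isCoboundedUnder_ge
  by_cases hx : x = 0
  · subst hx
    simpa using le_liminf_of_le hcob (Eventually.of_forall fun n => by positivity)
  · obtain ⟨φ, hφ1, hφx⟩ := exists_dual_vector ℝ x (norm_ne_zero_iff.mpr hx)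
    have ht : Tendsto (fun n => φ x - φ (u n)) atTop (𝓝 ‖x‖) := by
      have := (tendsto_const_nhds (x := φ x) (f := atTop (α := ℕ))).sub (hu φ)
      simpa [hφx] using this
    have hlim : liminf (fun n => φ x - φ (u n)) atTop = ‖x‖ := ht.liminf_eq
    calc ‖x‖ = liminf (fun n => φ x - φ (u n)) atTop := hlim.symm
      _ ≤ liminf (fun n => ‖u n - x‖) atTop := by
          refine liminf_le_liminf (Eventually.of_forall fun n => ?_) ht.isBoundedUnder_ge hcob
          have h1 : φ x - φ (u n) = φ (x - u n) := by simp [map_sub]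
          calc φ x - φ (u n) = φ (x - u n) := h1
            _ ≤ ‖φ (x - u n)‖ := le_abs_self _
            _ ≤ ‖φ‖ * ‖x - u n‖ := φ.le_opNorm _
            _ = ‖u n - x‖ := by rw [hφ1, one_mul, norm_sub_rev]

lemma etaSet_bddBelow (c R : ℝ) (hR : 0 ≤ R) :
    BddBelow { d : ℝ | ∃ (x : X) (u : ℕ → X), c ≤ ‖x‖ ∧ WeaklyNull u ∧
      limsup (fun n => ‖u n‖) atTop ≤ R ∧
      d = liminf (fun n => ‖u n - x‖) atTop - liminf (fun n => ‖u n‖) atTop } := by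
  refine ⟨-R, ?_⟩
  rintro d ⟨x, u, hx, hwn, hls, rfl⟩
  obtain ⟨C, hC0, hC⟩ := weaklyNull_bdd hwn
  have hble : IsBoundedUnder (· ≤ ·) atTop (fun n => ‖u n‖) :=
    isBoundedUnder_of ⟨C, hC⟩
  have hbge : IsBoundedUnder (· ≥ ·) atTop (fun n => ‖u n‖) :=
    isBoundedUnder_of ⟨0, fun n => norm_nonneg _⟩
  have h1 : (0 : ℝ) ≤ liminf (fun n => ‖u n - x‖) atTop :=
    (norm_nonneg x).trans (norm_le_liminf_sub hwn x)
  have h2 : liminf (fun n => ‖u n‖) atTop ≤ R :=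
    (liminf_le_limsup hble hbge).trans hls
  linarith

end Helpers

/-- For a real Banach space `X` without the Schur property, every `c > 0` and `R > 2` satisfy
`min (η_X(c,R)) (R/2 - 1) ≤ r_X(c)`. -/
theorem statement0 (X : Type*) [NormedAddCommGroup X] [NormedSpace ℝ X] [CompleteSpace X]
    (hX : ¬ SchurProperty X) (c R : ℝ) (hc : 0 < c) (hR : 2 < R) :
    min (etaModulus X c R) (R / 2 - 1) ≤ opialModulus X c := by
  -- produce a normalized weakly null sequence
  obtain ⟨u0, hwn0, hnt⟩ : ∃ u : ℕ → X, WeaklyNull u ∧ ¬ Tendsto (fun n => ‖u n‖) atTop (𝓝 0) := by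
    simpa [SchurProperty, not_forall] using hX
  obtain ⟨δ, hδ, hfreq⟩ : ∃ δ > (0:ℝ), ∃ᶠ n in atTop, δ ≤ ‖u0 n‖ := by
    by_contra h
    push_neg at h
    apply hnt
    rw [NormedAddCommGroup.tendsto_nhds_zero]
    intro ε hε
    filter_upwards [h ε hε] with n hn
    · rw [norm_norm]; exact hn
  obtain ⟨g0, hg0m, hg0⟩ := extraction_of_frequently_atTop hfreq
  have hne0 : ∀ k, ‖u0 (g0 k)‖ ≠ 0 := fun k => (lt_of_lt_of_le hδ (hg0 k)).ne'
  set v : ℕ → X := fun k => ‖u0 (g0 k)‖⁻¹ • u0 (g0 k) with hv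
  have hv1 : ∀ k, ‖v k‖ = 1 := by
    intro k
    simp only [hv, norm_smul, norm_inv, norm_norm]
    exact inv_mul_cancel₀ (hne0 k)
  have hvwn : WeaklyNull v := by
    intro φ
    apply squeeze_zero_norm (a := fun k => δ⁻¹ * ‖φ (u0 (g0 k))‖)
    · intro k
      have h1 : ‖φ (v k)‖ = ‖u0 (g0 k)‖⁻¹ * ‖φ (u0 (g0 k))‖ := by
        simp [hv, _root_.map_smul, norm_smul, abs_of_nonneg (inv_nonneg.mpr (norm_nonneg _))]
      rw [h1]
      exact mul_le_mul_of_nonneg_right (inv_anti₀ hδ (hg0 k)) (norm_nonneg _)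
    · have := ((hwn0 φ).comp hg0m.tendsto_atTop).norm.const_mul δ⁻¹
      simpa using this
  set x0 : X := c • v 0 with hx0
  have hx0n : ‖x0‖ = c := by
    rw [hx0, norm_smul, hv1 0, mul_one, Real.norm_of_nonneg hc.le]
  have hvlim : liminf (fun k => ‖v k‖) atTop = 1 := by
    have : (fun k => ‖v k‖) = fun _ => (1:ℝ) := funext hv1
    rw [this, liminf_const]
  -- nonemptiness of the Opial set
  have hSne : (Set.Nonempty { d : ℝ | ∃ (x : X) (u : ℕ → X), c ≤ ‖x‖ ∧ WeaklyNull u ∧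
      1 ≤ liminf (fun n => ‖u n‖) atTop ∧
      d = liminf (fun n => ‖u n - x‖) atTop - 1 }) :=
    ⟨_, ⟨x0, v, hx0n.ge, hvwn, hvlim.ge, rfl⟩⟩
  refine le_csInf hSne ?_
  rintro d ⟨x, u, hxc, hwn, hm1, rfl⟩
  set L := liminf (fun n => ‖u n - x‖) atTop with hLdef
  rcases le_or_gt (R / 2 - 1) (L - 1) with hcase | hcase
  · exact (min_le_right _ _).trans hcase
  · have hLR : L < R / 2 := by linarith
    obtain ⟨C, hC0, hC⟩ := weaklyNull_bdd hwn
    have hble : IsBoundedUnder (· ≤ ·) atTop (fun n => ‖u n‖) := isBoundedUnder_of ⟨C, hC⟩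
    have hbge : IsBoundedUnder (· ≥ ·) atTop (fun n => ‖u n‖) :=
      isBoundedUnder_of ⟨0, fun n => norm_nonneg _⟩
    have hxL : ‖x‖ ≤ L := norm_le_liminf_sub hwn x
    refine (min_le_left _ _).trans (le_of_forall_sub_le fun ε hε => ?_)
    rw [sub_le_iff_le_add]
    -- choose ε'
    set ε' := min ε (R - 2 * L) with hε'def
    have hε'0 : 0 < ε' := lt_min hε (by linarith)
    have hcobsub : IsCoboundedUnder (· ≥ ·) atTop (fun n => ‖u n - x‖) :=
      (isBoundedUnder_of ⟨C + ‖x‖, fun n =>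
        (norm_sub_le _ _).trans (add_le_add_left (hC n) _)⟩ :
        IsBoundedUnder (· ≤ ·) atTop (fun n => ‖u n - x‖)).isCoboundedUnder_ge
    have hfr : ∃ᶠ n in atTop, ‖u n - x‖ < L + ε' :=
      frequently_lt_of_liminf_lt hcobsub (by linarith)
    obtain ⟨g, hgm, hg⟩ := extraction_of_frequently_atTop hfr
    have hwwn : WeaklyNull (fun k => u (g k)) := fun φ => (hwn φ).comp hgm.tendsto_atTop
    have hwble : IsBoundedUnder (· ≤ ·) atTop (fun k => ‖u (g k)‖) :=
      isBoundedUnder_of ⟨C, fun k => hC (g k)⟩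
    have hwbge : IsBoundedUnder (· ≥ ·) atTop (fun k => ‖u (g k)‖) :=
      isBoundedUnder_of ⟨0, fun k => norm_nonneg _⟩
    have hwls : limsup (fun k => ‖u (g k)‖) atTop ≤ R := by
      refine limsup_le_of_le hwbge.isCoboundedUnder_le (Eventually.of_forall fun k => ?_)
      have h1 : ‖u (g k)‖ ≤ ‖u (g k) - x‖ + ‖x‖ := by
        simpa using norm_add_le (u (g k) - x) x
      have h2 : ε' ≤ R - 2 * L := min_le_right _ _
      have h3 : ‖u (g k) - x‖ < L + ε' := hg k
      linarith
    have hw1 : 1 ≤ liminf (fun k => ‖u (g k)‖) atTop := by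
      refine le_of_forall_sub_le fun γ hγ => ?_
      have h1 : ∀ᶠ n in atTop, 1 - γ < ‖u n‖ :=
        eventually_lt_of_lt_liminf (by linarith) hbge
      have h2 : ∀ᶠ k in atTop, 1 - γ < ‖u (g k)‖ := hgm.tendsto_atTop.eventually h1
      exact le_liminf_of_le hwble.isCoboundedUnder_ge (h2.mono fun k hk => hk.le)
    have hwL : liminf (fun k => ‖u (g k) - x‖) atTop ≤ L + ε' :=
      liminf_le_of_frequently_le
        (Eventually.of_forall fun k => (hg k).le).frequently
        (isBoundedUnder_of ⟨0, fun k => norm_nonneg _⟩)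
    have hmem : (liminf (fun k => ‖u (g k) - x‖) atTop -
        liminf (fun k => ‖u (g k)‖) atTop) ∈
        { d : ℝ | ∃ (x : X) (u : ℕ → X), c ≤ ‖x‖ ∧ WeaklyNull u ∧
          limsup (fun n => ‖u n‖) atTop ≤ R ∧
          d = liminf (fun n => ‖u n - x‖) atTop - liminf (fun n => ‖u n‖) atTop } :=
      ⟨x, fun k => u (g k), hxc, hwwn, hwls, rfl⟩
    have heta : etaModulus X c R ≤ liminf (fun k => ‖u (g k) - x‖) atTop -
        liminf (fun k => ‖u (g k)‖) atTop :=
      csInf_le (etaSet_bddBelow c R (by linarith)) hmem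
    have hε'ε : ε' ≤ ε := min_le_left _ _
    linarith
end

section
/- Let X be a real Banach space that does not have the Schur property. Then for all ε, R > 0 with r_X(ε/R) > 0 one has ε·r_X(ε/R) / (2 + r_X(ε/R)) ≤ η_X(ε,R). -/
open Filter Topology MeasureTheory
open scoped ENNReal ZeroAtInfty

section AuxLemmas

private lemma liminf_nonneg'' {f : ℕ → ℝ} (h : ∀ n, 0 ≤ f n) : 0 ≤ liminf f atTop := by
  rw [liminf_eq]
  by_cases hb : BddAbove {a : ℝ | ∀ᶠ n in atTop, a ≤ f n}
  · exact le_csSup hb (Eventually.of_forall h)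
  · rw [Real.sSup_of_not_bddAbove hb]

private lemma exists_subseq_tendsto_liminf' {f : ℕ → ℝ} {C : ℝ}
    (h0 : ∀ n, 0 ≤ f n) (hC : ∀ n, f n ≤ C) :
    ∃ ψ : ℕ → ℕ, StrictMono ψ ∧ Tendsto (f ∘ ψ) atTop (𝓝 (liminf f atTop)) := by
  set M := liminf f atTop with hMdef
  apply TopologicalSpace.FirstCountableTopology.tendsto_subseq
  rw [mapClusterPt_iff_frequently]
  intro s hs
  rcases Metric.mem_nhds_iff.mp hs with ⟨δ, hδ, hball⟩
  have hS0 : (0:ℝ) ∈ {a : ℝ | ∀ᶠ n in atTop, a ≤ f n} := Eventually.of_forall h0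
  have hSbdd : BddAbove {a : ℝ | ∀ᶠ n in atTop, a ≤ f n} := by
    refine ⟨C, fun a ha => ?_⟩
    rcases ha.exists with ⟨n, hn⟩
    exact hn.trans (hC n)
  have hM : M = sSup {a : ℝ | ∀ᶠ n in atTop, a ≤ f n} := liminf_eq
  have h1 : ∀ᶠ n in atTop, M - δ < f n := by
    have hlt : M - δ < sSup {a : ℝ | ∀ᶠ n in atTop, a ≤ f n} := by rw [← hM]; linarith
    rcases exists_lt_of_lt_csSup ⟨0, hS0⟩ hlt with ⟨a, haS, ha⟩
    exact haS.mono fun n hn => lt_of_lt_of_le ha hn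
  have h2 : ∃ᶠ n in atTop, f n < M + δ := by
    by_contra hcon
    rw [not_frequently] at hcon
    have hmem : M + δ ∈ {a : ℝ | ∀ᶠ n in atTop, a ≤ f n} :=
      hcon.mono fun n hn => le_of_not_gt hn
    have := le_csSup hSbdd hmem
    rw [← hM] at this; linarith
  refine (h2.and_eventually h1).mono fun n hn => hball ?_
  rw [Metric.mem_ball, Real.dist_eq, abs_lt]
  constructor <;> [linarith [hn.2]; linarith [hn.1]]


private lemma weaklyNull_bounded' {X : Type*} [NormedAddCommGroup X] [NormedSpace ℝ X]
    {u : ℕ → X} (hu : WeaklyNull u) : ∃ C : ℝ, 0 ≤ C ∧ ∀ n, ‖u n‖ ≤ C := by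
  have hpt : ∀ φ : StrongDual ℝ X, ∃ C : ℝ, ∀ n : ℕ,
      ‖NormedSpace.inclusionInDoubleDual ℝ X (u n) φ‖ ≤ C := by
    intro φ
    obtain ⟨b, hb⟩ := ((hu φ).norm).bddAbove_range
    exact ⟨b, fun n => hb ⟨n, rfl⟩⟩
  obtain ⟨C, hC⟩ := banach_steinhaus hpt
  refine ⟨max C 0, le_max_right _ _, fun n => ?_⟩
  have hnorm : ‖NormedSpace.inclusionInDoubleDual ℝ X (u n)‖ = ‖u n‖ :=
    (NormedSpace.inclusionInDoubleDualLi ℝ (E := X)).norm_map (u n)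
  rw [← hnorm]
  exact (hC n).trans (le_max_left _ _)

private lemma opial_bddBelow' (X : Type*) [NormedAddCommGroup X] [NormedSpace ℝ X] (c : ℝ) :
    BddBelow { d : ℝ | ∃ (x : X) (u : ℕ → X), c ≤ ‖x‖ ∧ WeaklyNull u ∧
      1 ≤ liminf (fun n => ‖u n‖) atTop ∧
      d = liminf (fun n => ‖u n - x‖) atTop - 1 } := by
  refine ⟨-1, ?_⟩
  rintro d ⟨x, u, -, -, -, rfl⟩
  have := liminf_nonneg'' (f := fun n => ‖u n - x‖) (fun n => norm_nonneg _)
  linarith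

private lemma opial_bound' {X : Type*} [NormedAddCommGroup X] [NormedSpace ℝ X]
    {c t M : ℝ} (ht : 0 < t) {x : X} {v : ℕ → X}
    (hx : c * t ≤ ‖x‖) (hv : WeaklyNull v)
    (hnorm : Tendsto (fun k => ‖v k‖) atTop (𝓝 t))
    (hM : Tendsto (fun k => ‖v k - x‖) atTop (𝓝 M)) :
    t * (1 + opialModulus X c) ≤ M := by
  have htinv : (0:ℝ) < t⁻¹ := inv_pos.mpr ht
  have hw : WeaklyNull (fun k => t⁻¹ • v k) := by
    intro φ
    have := (hv φ).const_mul t⁻¹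
    simpa [_root_.map_smul, smul_eq_mul] using this
  have h1 : Tendsto (fun k => ‖t⁻¹ • v k‖) atTop (𝓝 1) := by
    have := hnorm.const_mul t⁻¹
    simpa [norm_smul, abs_inv, abs_of_pos ht, inv_mul_cancel₀ ht.ne'] using this
  have h2 : Tendsto (fun k => ‖t⁻¹ • v k - t⁻¹ • x‖) atTop (𝓝 (t⁻¹ * M)) := by
    have := hM.const_mul t⁻¹
    simpa [← smul_sub, norm_smul, abs_inv, abs_of_pos ht] using this
  have hxc : c ≤ ‖t⁻¹ • x‖ := by
    rw [norm_smul, Real.norm_eq_abs, abs_of_pos htinv]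
    rw [← mul_le_mul_iff_right₀ ht, ← mul_assoc, mul_inv_cancel₀ ht.ne', one_mul, mul_comm t c]
    exact hx
  have hmem : t⁻¹ * M - 1 ∈ { d : ℝ | ∃ (y : X) (u : ℕ → X), c ≤ ‖y‖ ∧ WeaklyNull u ∧
      1 ≤ liminf (fun n => ‖u n‖) atTop ∧
      d = liminf (fun n => ‖u n - y‖) atTop - 1 } :=
    ⟨t⁻¹ • x, fun k => t⁻¹ • v k, hxc, hw, by rw [h1.liminf_eq], by rw [h2.liminf_eq]⟩
  have hle : opialModulus X c ≤ t⁻¹ * M - 1 := csInf_le (opial_bddBelow' X c) hmem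
  have := mul_le_mul_of_nonneg_left hle ht.le
  calc t * (1 + opialModulus X c) ≤ t * (1 + (t⁻¹ * M - 1)) := by nlinarith
    _ = M := by field_simp; ring

end AuxLemmas

/-- For a real Banach space `X` without the Schur property and all `ε, R > 0` with
`r_X(ε/R) > 0`, one has `ε·r_X(ε/R)/(2 + r_X(ε/R)) ≤ η_X(ε,R)`. -/
theorem statement1 (X : Type*) [NormedAddCommGroup X] [NormedSpace ℝ X] [CompleteSpace X]
    (hX : ¬ SchurProperty X) (ε R : ℝ) (hε : 0 < ε) (hR : 0 < R)
    (hr : 0 < opialModulus X (ε / R)) :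
    ε * opialModulus X (ε / R) / (2 + opialModulus X (ε / R)) ≤ etaModulus X ε R := by
  set r := opialModulus X (ε / R) with hrdef
  have h2r : (0:ℝ) < 2 + r := by linarith
  have hδR : (0:ℝ) < ε / (2 + r) := div_pos hε h2r
  have key : ε * r / (2 + r) = (ε / (2 + r)) * r := by ring
  obtain ⟨u0, hu0, hnot⟩ : ∃ u : ℕ → X, WeaklyNull u ∧
      ¬ Tendsto (fun n => ‖u n‖) atTop (𝓝 0) := by
    by_contra h
    push_neg at h
    exact hX h
  obtain ⟨z, hz⟩ : ∃ z : X, z ≠ 0 := by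
    by_contra h
    push_neg at h
    refine hnot ?_
    have hz0 : (fun n => ‖u0 n‖) = fun _ => (0:ℝ) := funext fun n => by
      rw [h (u0 n), norm_zero]
    rw [hz0]
    exact tendsto_const_nhds
  have hzn : 0 < ‖z‖ := norm_pos_iff.mpr hz
  have hxnorm : ‖(ε / ‖z‖) • z‖ = ε := by
    rw [norm_smul, Real.norm_eq_abs, abs_of_pos (div_pos hε hzn), div_mul_cancel₀ _ hzn.ne']
  rw [etaModulus]
  have hne : Set.Nonempty {d : ℝ | ∃ (x : X) (u : ℕ → X), ε ≤ ‖x‖ ∧ WeaklyNull u ∧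
      limsup (fun n => ‖u n‖) atTop ≤ R ∧
      d = liminf (fun n => ‖u n - x‖) atTop - liminf (fun n => ‖u n‖) atTop} := by
    refine ⟨ε, (ε / ‖z‖) • z, fun _ => 0, hxnorm.ge, ?_, ?_, ?_⟩
    · intro φ
      simp only [map_zero]; exact tendsto_const_nhds
    · have e2 : (fun _ : ℕ => ‖(0:X)‖) = fun _ => (0:ℝ) := by simp
      rw [e2, limsup_const]
      exact hR.le
    · have e1 : (fun n : ℕ => ‖(0:X) - (ε / ‖z‖) • z‖) = fun _ => ε := by
        funext n; rw [zero_sub, norm_neg, hxnorm]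
      have e2 : (fun _ : ℕ => ‖(0:X)‖) = fun _ => (0:ℝ) := by simp
      rw [e1, e2, liminf_const, liminf_const, sub_zero]
  refine le_csInf hne ?_
  rintro d ⟨x, u, hx, hu, hsup, rfl⟩
  obtain ⟨C, hC0, hC⟩ := weaklyNull_bounded' hu
  set L := liminf (fun n => ‖u n‖) atTop with hL
  set M := liminf (fun n => ‖u n - x‖) atTop with hM
  obtain ⟨ψ, hψ, hψt⟩ := exists_subseq_tendsto_liminf' (f := fun n => ‖u n - x‖)
    (C := C + ‖x‖) (fun n => norm_nonneg _)
    (fun n => (norm_sub_le _ _).trans (by linarith [hC n]))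
  obtain ⟨t, htmem, σ, hσ, hσt⟩ := tendsto_subseq_of_bounded (x := fun k => ‖u (ψ k)‖)
    (Metric.isBounded_Icc 0 C) (fun k => ⟨norm_nonneg _, hC _⟩)
  rw [isClosed_Icc.closure_eq] at htmem
  set τ := ψ ∘ σ with hτdef
  have hτmono : StrictMono τ := hψ.comp hσ
  have hτ : Tendsto τ atTop atTop := hτmono.tendsto_atTop
  have hv : WeaklyNull (fun k => u (τ k)) := fun φ => (hu φ).comp hτ
  have hvnorm : Tendsto (fun k => ‖u (τ k)‖) atTop (𝓝 t) := hσt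
  have hvM : Tendsto (fun k => ‖u (τ k) - x‖) atTop (𝓝 M) := hψt.comp hσ.tendsto_atTop
  have hLt : L ≤ t := by
    rw [hL, liminf_eq]
    refine csSup_le ⟨0, Eventually.of_forall fun n => norm_nonneg _⟩ fun a ha => ?_
    exact ge_of_tendsto hvnorm (hτ.eventually ha)
  have htR : t ≤ R := by
    have h1 : t ≤ limsup (fun n => ‖u n‖) atTop := by
      rw [limsup_eq]
      refine le_csInf ⟨C, Eventually.of_forall hC⟩ fun a ha => ?_
      exact le_of_tendsto hvnorm (hτ.eventually ha)
    exact h1.trans hsup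
  rcases le_or_gt (ε / (2 + r)) t with hcase | hcase
  · have ht0 : 0 < t := lt_of_lt_of_le hδR hcase
    have hxt : (ε / R) * t ≤ ‖x‖ := by
      have h2 : (ε / R) * t ≤ (ε / R) * R :=
        mul_le_mul_of_nonneg_left htR (div_nonneg hε.le hR.le)
      rw [div_mul_cancel₀ _ hR.ne'] at h2
      exact h2.trans hx
    have hop : t * (1 + r) ≤ M := opial_bound' ht0 hxt hv hvnorm hvM
    have h3 : (ε / (2 + r)) * r ≤ t * r := mul_le_mul_of_nonneg_right hcase hr.le
    rw [key]
    nlinarith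
  · have hMx : ‖x‖ - t ≤ M := by
      have hsub : Tendsto (fun k => ‖x‖ - ‖u (τ k)‖) atTop (𝓝 (‖x‖ - t)) :=
        tendsto_const_nhds.sub hvnorm
      refine le_of_tendsto_of_tendsto' hsub hvM fun k => ?_
      calc ‖x‖ - ‖u (τ k)‖ ≤ ‖x - u (τ k)‖ := norm_sub_norm_le _ _
        _ = ‖u (τ k) - x‖ := norm_sub_rev _ _
    have hq : ε - 2 * (ε / (2 + r)) = ε * r / (2 + r) := by
      field_simp
      ring
    linarith
end

section
/- Let 1 < p < ∞, let I be an infinite index set and let (X_i)_{i∈I} be a family of real Banach spaces such that α := sup{ R([⊕_{i∈J} X_i]_p) : J ⊆ I finite } < 2. Then R([⊕_{i∈I} X_i]_p) < 2. (This is the ℓp-instance of the general theorem for absolute sums; for ℓp with 1 < p < ∞ the hypothesis on the modulus of convexity of the norm of the sum, δ((1 − α/2)²) > 0, holds automatically by uniform convexity.) -/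
open Filter Topology MeasureTheory
open scoped ENNReal ZeroAtInfty

noncomputable section MyAux
open Filter
variable {Y : Type*} [NormedAddCommGroup Y] [NormedSpace ℝ Y]

lemma myWeaklyNull_zero : WeaklyNull (fun _ : ℕ => (0 : Y)) := by
  intro φ; simp only [map_zero]; exact tendsto_const_nhds

lemma my_gf_mem_le_two {a : ℝ}
    (ha : ∃ (x : Y) (u : ℕ → Y), ‖x‖ ≤ 1 ∧ (∀ n, ‖u n‖ ≤ 1) ∧ WeaklyNull u ∧
      a = liminf (fun n => ‖u n + x‖) atTop) : a ≤ 2 := by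
  obtain ⟨x, u, hx, hu, -, rfl⟩ := ha
  refine liminf_le_of_frequently_le (Frequently.of_forall fun n => ?_)
    (isBoundedUnder_of ⟨0, fun n => norm_nonneg _⟩)
  calc ‖u n + x‖ ≤ ‖u n‖ + ‖x‖ := norm_add_le _ _
    _ ≤ 2 := by linarith [hu n, hx]

lemma my_gf_zero_mem : (0:ℝ) ∈ { a : ℝ | ∃ (x : Y) (u : ℕ → Y), ‖x‖ ≤ 1 ∧ (∀ n, ‖u n‖ ≤ 1) ∧
    WeaklyNull u ∧ a = liminf (fun n => ‖u n + x‖) atTop } :=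
  ⟨0, fun _ => 0, by simp, fun _ => by simp, myWeaklyNull_zero, by simp [liminf_const]⟩

lemma my_le_garciaFalset {a : ℝ}
    (ha : ∃ (x : Y) (u : ℕ → Y), ‖x‖ ≤ 1 ∧ (∀ n, ‖u n‖ ≤ 1) ∧ WeaklyNull u ∧
      a = liminf (fun n => ‖u n + x‖) atTop) : a ≤ garciaFalset Y :=
  le_csSup ⟨2, fun _ hb => my_gf_mem_le_two hb⟩ ha

lemma my_garciaFalset_le {c : ℝ}
    (hc : ∀ a : ℝ, (∃ (x : Y) (u : ℕ → Y), ‖x‖ ≤ 1 ∧ (∀ n, ‖u n‖ ≤ 1) ∧ WeaklyNull u ∧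
      a = liminf (fun n => ‖u n + x‖) atTop) → a ≤ c) : garciaFalset Y ≤ c :=
  csSup_le ⟨0, my_gf_zero_mem⟩ hc

lemma my_garciaFalset_le_two : garciaFalset Y ≤ 2 :=
  my_garciaFalset_le fun _ ha => my_gf_mem_le_two ha

lemma my_gap_strictMono {q : ℝ} (hq : 1 < q) :
    StrictMonoOn (fun s : ℝ => s ^ q - (s - 1) ^ q) (Set.Icc 1 2) := by
  have hq0 : (0:ℝ) < q := by linarith
  apply strictMonoOn_of_deriv_pos (convex_Icc 1 2)
  · apply ContinuousOn.sub
    · exact continuousOn_id.rpow_const fun x _ => Or.inr hq0.le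
    · exact (continuousOn_id.sub continuousOn_const).rpow_const fun x _ => Or.inr hq0.le
  · intro x hx
    rw [interior_Icc] at hx
    obtain ⟨hx1, hx2⟩ := hx
    have h1 : HasDerivAt (fun s : ℝ => s ^ q) (q * x ^ (q - 1)) x :=
      Real.hasDerivAt_rpow_const (Or.inl (by linarith))
    have h2 : HasDerivAt (fun s : ℝ => (s - 1) ^ q) (q * (x - 1) ^ (q - 1) * 1) x := by
      have h3 : HasDerivAt (fun y : ℝ => y ^ q) (q * (x - 1) ^ (q - 1)) (x - 1) :=
        Real.hasDerivAt_rpow_const (Or.inl (by intro h; rw [sub_eq_zero] at h; linarith))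
      exact h3.comp x ((hasDerivAt_id x).sub_const 1)
    have H : HasDerivAt (fun s : ℝ => s ^ q - (s - 1) ^ q)
        (q * x ^ (q - 1) - q * (x - 1) ^ (q - 1) * 1) x := h1.sub h2
    rw [H.deriv]
    have hlt : (x - 1) ^ (q - 1) < x ^ (q - 1) :=
      Real.rpow_lt_rpow (by linarith) (by linarith) (by linarith)
    nlinarith

lemma my_case_bound {q a c M : ℝ} (hq : 1 < q) (ha0 : 0 ≤ a) (ha1 : a ≤ 1)
    (hc1 : 1 ≤ c) (hc2 : c ≤ 2) (hM0 : 0 ≤ M) (hMa : M ≤ a + 1) (hMc : M ≤ c) :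
    M ^ q + (1 - a ^ q) ≤ c ^ q + 1 - (c - 1) ^ q := by
  have hq0 : (0:ℝ) < q := by linarith
  rcases le_or_gt a (c - 1) with h | h
  · have h1 : M ^ q ≤ (a + 1) ^ q := Real.rpow_le_rpow hM0 hMa hq0.le
    have h2 : (a + 1) ^ q - ((a + 1) - 1) ^ q ≤ c ^ q - (c - 1) ^ q :=
      (my_gap_strictMono hq).monotoneOn ⟨by linarith, by linarith⟩ ⟨hc1, hc2⟩ (by linarith)
    have h3 : ((a + 1) - 1 : ℝ) = a := by ring
    rw [h3] at h2
    linarith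
  · have h1 : M ^ q ≤ c ^ q := Real.rpow_le_rpow hM0 hMc hq0.le
    have h2 : (c - 1) ^ q ≤ a ^ q := Real.rpow_le_rpow (by linarith) (by linarith) hq0.le
    linarith

lemma my_beta_lt_two {q c : ℝ} (hq : 1 < q) (hc1 : 1 ≤ c) (hc2 : c < 2) :
    (c ^ q + 1 - (c - 1) ^ q) ^ (1 / q) < 2 := by
  have hq0 : (0:ℝ) < q := by linarith
  have h2 : c ^ q - (c - 1) ^ q < 2 ^ q - (2 - 1 : ℝ) ^ q :=
    my_gap_strictMono hq ⟨hc1, hc2.le⟩ ⟨one_le_two, le_rfl⟩ hc2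
  have h21 : ((2:ℝ) - 1) ^ q = 1 := by norm_num
  have hnn : (0:ℝ) ≤ c ^ q + 1 - (c - 1) ^ q := by
    have : (c - 1) ^ q ≤ c ^ q := Real.rpow_le_rpow (by linarith) (by linarith) hq0.le
    linarith
  calc (c ^ q + 1 - (c - 1) ^ q) ^ (1 / q) < (2 ^ q) ^ (1 / q) :=
        Real.rpow_lt_rpow hnn (by rw [h21] at h2; linarith) (by positivity)
    _ = 2 := by
        rw [← Real.rpow_mul (by norm_num), mul_one_div_cancel hq0.ne', Real.rpow_one]

end MyAux

noncomputable section MyRestr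

variable (p : ℝ≥0∞) [Fact (1 ≤ p)] {I : Type*} (X : I → Type*)
  [∀ i, NormedAddCommGroup (X i)] [∀ i, NormedSpace ℝ (X i)]

def myRestrAux (J : Finset I) : lp X p →ₗ[ℝ] lp (fun j : J => X j) p where
  toFun f := ⟨fun j => f j, memℓp_gen Summable.of_finite⟩
  map_add' f g := by
    apply Subtype.ext
    funext j
    simp only [lp.coeFn_add, Pi.add_apply]
  map_smul' c f := by
    apply Subtype.ext
    funext j
    simp only [lp.coeFn_smul, Pi.smul_apply, RingHom.id_apply]

lemma myRestrAux_norm (hq : 0 < p.toReal) (J : Finset I) (f : lp X p) :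
    ‖myRestrAux p X J f‖ ≤ 1 * ‖f‖ := by
  rw [one_mul]
  refine lp.norm_le_of_tsum_le hq (lp.norm_nonneg' f) ?_
  rw [tsum_fintype]
  calc ∑ j : J, ‖(myRestrAux p X J f : ∀ j : J, X j) j‖ ^ p.toReal
      = ∑ i ∈ J, ‖f i‖ ^ p.toReal := Finset.sum_coe_sort J fun i => ‖f i‖ ^ p.toReal
    _ ≤ ‖f‖ ^ p.toReal := lp.sum_rpow_le_norm_rpow hq f J

def myRestr (hq : 0 < p.toReal) (J : Finset I) : lp X p →L[ℝ] lp (fun j : J => X j) p :=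
  LinearMap.mkContinuous (myRestrAux p X J) 1 (myRestrAux_norm p X hq J)

lemma myRestr_apply (hq : 0 < p.toReal) (J : Finset I) (f : lp X p) (j : J) :
    (myRestr p X hq J f : ∀ j : J, X j) j = f j := rfl

lemma myRestr_norm_le (hq : 0 < p.toReal) (J : Finset I) (f : lp X p) :
    ‖myRestr p X hq J f‖ ≤ ‖f‖ := by
  have h := myRestrAux_norm p X hq J f
  rw [one_mul] at h
  exact h

end MyRestr

/-- If `1 < p < ∞`, `I` is infinite and the García-Falset coefficients of all finite ℓᵖ-subsums
have supremum `α < 2`, then the García-Falset coefficient of the full ℓᵖ-sum is `< 2`. -/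
theorem statement3 (p : ℝ≥0∞) [Fact (1 ≤ p)] (hp1 : 1 < p) (hp2 : p ≠ ⊤)
    {I : Type*} [Infinite I] (X : I → Type*) [∀ i, NormedAddCommGroup (X i)]
    [∀ i, NormedSpace ℝ (X i)] [∀ i, CompleteSpace (X i)]
    (hα : sSup { a : ℝ | ∃ J : Finset I, a = garciaFalset (lp (fun j : J => X j) p) } < 2) :
    garciaFalset (lp X p) < 2 := by
  classical
  set q : ℝ := p.toReal with hqdef
  have hq1 : 1 < q := by
    have := (ENNReal.toReal_lt_toReal ENNReal.one_ne_top hp2).2 hp1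
    simpa using this
  have hq0 : (0:ℝ) < q := by linarith
  set αv : ℝ := sSup { a : ℝ | ∃ J : Finset I, a = garciaFalset (lp (fun j : J => X j) p) }
    with hαdef
  have hJle : ∀ J : Finset I, garciaFalset (lp (fun j : J => X j) p) ≤ αv := by
    intro J
    refine le_csSup ⟨2, ?_⟩ ⟨J, rfl⟩
    rintro b ⟨J', rfl⟩
    exact my_garciaFalset_le_two
  set c : ℝ := max αv 1 with hcdef
  have hc1 : 1 ≤ c := le_max_right _ _
  have hc2 : c < 2 := max_lt hα one_lt_two
  set β : ℝ := (c ^ q + 1 - (c - 1) ^ q) ^ (1 / q) with hβdef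
  have hβ2 : β < 2 := my_beta_lt_two hq1 hc1 hc2
  have hmain : garciaFalset (lp X p) ≤ β := by
    refine my_garciaFalset_le fun L hL => ?_
    obtain ⟨x, u, hx, hu, hwn, rfl⟩ := hL
    refine le_of_forall_pos_le_add fun ε hε => ?_
    -- choose a finite set capturing the mass of x up to ε
    obtain ⟨J, hJ⟩ : ∃ J : Finset I,
        ∑' i : ((J : Set I)ᶜ : Set I), ‖x (i : I)‖ ^ q < ε ^ q := by
      have hsx : Summable fun i => ‖x i‖ ^ q := (lp.memℓp x).summable hq0
      have hT : Tendsto (fun s : Finset I => ∑ i ∈ s, ‖x i‖ ^ q) atTop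
          (𝓝 (∑' i, ‖x i‖ ^ q)) := hsx.hasSum
      have hεq : (0:ℝ) < ε ^ q := Real.rpow_pos_of_pos hε q
      have hev : ∀ᶠ s : Finset I in atTop,
          (∑' i, ‖x i‖ ^ q) - ε ^ q < ∑ i ∈ s, ‖x i‖ ^ q :=
        hT.eventually (eventually_gt_nhds (by linarith))
      obtain ⟨J, hJs⟩ := hev.exists
      refine ⟨J, ?_⟩
      have hsplit := Summable.tsum_add_tsum_compl (s := (J : Set I))
        (hsx.subtype _) (hsx.subtype _)
      rw [Finset.tsum_subtype' J (fun i => ‖x i‖ ^ q)] at hsplit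
      have : ∑' i : ((J : Set I)ᶜ : Set I), ‖x (i : I)‖ ^ q
          = (∑' i, ‖x i‖ ^ q) - ∑ i ∈ J, ‖x i‖ ^ q := by linarith
      linarith
    -- the truncation of x to J
    set xJ : lp X p := ⟨fun i => if i ∈ J then x i else 0,
      memℓp_gen (Summable.of_nonneg_of_le
        (fun i => Real.rpow_nonneg (norm_nonneg _) _)
        (fun i => by
          by_cases h : i ∈ J
          · simp [h]
          · simp [h, Real.zero_rpow hq0.ne', Real.rpow_nonneg]; exact Real.rpow_le_rpow le_rfl (norm_nonneg _) hq0.le)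
        ((lp.memℓp x).summable hq0))⟩ with hxJdef
    have hxJcoe : ∀ i, (xJ : ∀ i, X i) i = if i ∈ J then x i else 0 := fun i => rfl
    -- restriction operator
    set R := myRestr p X hq0 J with hRdef
    set y := R x with hydef
    set v : ℕ → lp (fun j : J => X j) p := fun m => R (u m) with hvdef
    have hRnorm : ∀ f : lp X p, ‖R f‖ ≤ ‖f‖ := myRestr_norm_le p X hq0 J
    have hv1 : ∀ m, ‖v m‖ ≤ 1 := fun m => (hRnorm (u m)).trans (hu m)
    have hy1 : ‖y‖ ≤ 1 := (hRnorm x).trans hx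
    -- norm computations
    have normJ : ∀ (w : lp (fun j : J => X j) p) (g : I → ℝ),
        (∀ j : J, ‖(w : ∀ j : J, X j) j‖ ^ q = g j) → ‖w‖ ^ q = ∑ i ∈ J, g i := by
      intro w g hg
      rw [lp.norm_rpow_eq_tsum hq0, tsum_fintype, ← Finset.sum_coe_sort J g]
      exact Finset.sum_congr rfl fun j _ => hg j
    have splitfull : ∀ w : lp X p,
        ‖w‖ ^ q = ∑' i : (J : Set I), ‖(w : ∀ i, X i) (i : I)‖ ^ q
          + ∑' i : ((J : Set I)ᶜ : Set I), ‖(w : ∀ i, X i) (i : I)‖ ^ q := by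
      intro w
      rw [lp.norm_rpow_eq_tsum hq0]
      exact (Summable.tsum_add_tsum_compl (s := (J : Set I))
        (((lp.memℓp w).summable hq0).subtype _)
        (((lp.memℓp w).summable hq0).subtype _)).symm
    have key : ∀ m, ‖u m + xJ‖ ^ q + ‖v m‖ ^ q = ‖v m + y‖ ^ q + ‖u m‖ ^ q := by
      intro m
      have e3 : ‖v m‖ ^ q = ∑ i ∈ J, ‖u m i‖ ^ q :=
        normJ (v m) (fun i => ‖u m i‖ ^ q) (fun j => rfl)
      have e4 : ‖v m + y‖ ^ q = ∑ i ∈ J, ‖u m i + x i‖ ^ q := by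
        refine normJ (v m + y) (fun i => ‖u m i + x i‖ ^ q) (fun j => ?_)
        rw [lp.coeFn_add]
        rfl
      have e1 : ‖u m + xJ‖ ^ q = ∑ i ∈ J, ‖u m i + x i‖ ^ q
          + ∑' i : ((J : Set I)ᶜ : Set I), ‖u m (i : I)‖ ^ q := by
        rw [splitfull (u m + xJ)]
        congr 1
        · rw [← Finset.tsum_subtype' J (fun i => ‖u m i + x i‖ ^ q)]
          refine tsum_congr fun i => ?_
          rw [lp.coeFn_add]
          simp only [Pi.add_apply, hxJcoe, if_pos (Finset.mem_coe.mp i.2)]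
        · refine tsum_congr fun i => ?_
          rw [lp.coeFn_add]
          have hni : (i : I) ∉ J := fun h => i.2 (Finset.mem_coe.mpr h)
          simp only [Pi.add_apply, hxJcoe, if_neg hni, add_zero]
      have e2 : ‖u m‖ ^ q = ∑ i ∈ J, ‖u m i‖ ^ q
          + ∑' i : ((J : Set I)ᶜ : Set I), ‖u m (i : I)‖ ^ q := by
        rw [splitfull (u m)]
        congr 1
        exact Finset.tsum_subtype' J (fun i => ‖u m i‖ ^ q)
      linarith
    -- tail estimate
    have htail : ‖x - xJ‖ ≤ ε := by
      refine lp.norm_le_of_tsum_le hq0 hε.le ?_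
      have hs : ∑' i, ‖(x - xJ : lp X p) i‖ ^ q
          = ∑' i : ((J : Set I)ᶜ : Set I), ‖x (i : I)‖ ^ q := by
        have := splitfull (x - xJ)
        rw [lp.norm_rpow_eq_tsum hq0] at this
        rw [this]
        have hJ0 : ∑' i : (J : Set I), ‖(x - xJ : lp X p) (i : I)‖ ^ q = 0 := by
          refine (tsum_congr fun i => ?_).trans tsum_zero
          rw [lp.coeFn_sub]
          simp only [Pi.sub_apply, hxJcoe, if_pos (Finset.mem_coe.mp i.2), sub_self,
            norm_zero]
          exact Real.zero_rpow hq0.ne'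
        have hJc : ∑' i : ((J : Set I)ᶜ : Set I), ‖(x - xJ : lp X p) (i : I)‖ ^ q
            = ∑' i : ((J : Set I)ᶜ : Set I), ‖x (i : I)‖ ^ q := by
          refine tsum_congr fun i => ?_
          rw [lp.coeFn_sub]
          have hni : (i : I) ∉ J := fun h => i.2 (Finset.mem_coe.mpr h)
          simp only [Pi.sub_apply, hxJcoe, if_neg hni, sub_zero]
        rw [hJ0, hJc, zero_add]
      rw [hs]
      exact hJ.le
    -- subsequence along which ‖v m‖ converges
    obtain ⟨a, haI, φ, hφ, hconv⟩ :=
      (isCompact_Icc (a := (0:ℝ)) (b := 1)).tendsto_subseq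
        (x := fun m => ‖v m‖) (fun m => ⟨norm_nonneg _, hv1 m⟩)
    set M : ℝ := liminf (fun k => ‖v (φ k) + y‖) atTop with hMdef
    have hwv : WeaklyNull fun k => v (φ k) := by
      intro ψ
      exact (hwn (ψ.comp R)).comp hφ.tendsto_atTop
    have hMα : M ≤ αv :=
      (my_le_garciaFalset ⟨y, fun k => v (φ k), hy1, fun k => hv1 _, hwv, rfl⟩).trans (hJle J)
    have hbdd : IsBoundedUnder (· ≤ ·) atTop fun k => ‖v (φ k) + y‖ :=
      isBoundedUnder_of ⟨2, fun k => by
        have := norm_add_le (v (φ k)) y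
        have h1 := hv1 (φ k)
        linarith⟩
    have hM0 : 0 ≤ M :=
      le_liminf_of_le hbdd.isCoboundedUnder_ge
        (Eventually.of_forall fun k => norm_nonneg _)
    have hMa : M ≤ a + 1 := by
      have h1 : M ≤ liminf (fun k => ‖v (φ k)‖ + 1) atTop := by
        refine liminf_le_liminf (Eventually.of_forall fun k => ?_)
          (isBoundedUnder_of ⟨0, fun k => norm_nonneg _⟩)
          ((isBoundedUnder_of ⟨2, fun k => by linarith [hv1 (φ k)]⟩).isCoboundedUnder_ge)
        calc ‖v (φ k) + y‖ ≤ ‖v (φ k)‖ + ‖y‖ := norm_add_le _ _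
          _ ≤ ‖v (φ k)‖ + 1 := by linarith
      have h2 : Tendsto (fun k => ‖v (φ k)‖ + 1) atTop (𝓝 (a + 1)) := hconv.add_const 1
      exact h1.trans (le_of_eq h2.liminf_eq)
    have haq : a ^ q ≤ 1 := Real.rpow_le_one haI.1 haI.2 hq0.le
    -- the δ-step
    have hstep : ∀ δ : ℝ, 0 < δ →
        liminf (fun n => ‖u n + x‖) atTop ≤ ((M + δ) ^ q + (1 - a ^ q) + δ) ^ (1 / q) + ε := by
      intro δ hδ
      have hfreq : ∃ᶠ k in atTop, ‖v (φ k) + y‖ < M + δ :=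
        frequently_lt_of_liminf_lt hbdd.isCoboundedUnder_ge (by linarith)
      have htnd : Tendsto (fun k => ‖v (φ k)‖ ^ q) atTop (𝓝 (a ^ q)) :=
        hconv.rpow_const (Or.inr hq0.le)
      have hevB : ∀ᶠ k in atTop, 1 - ‖v (φ k)‖ ^ q < 1 - a ^ q + δ := by
        have h2 : ∀ᶠ k in atTop, a ^ q - δ < ‖v (φ k)‖ ^ q :=
          htnd.eventually (eventually_gt_nhds (by linarith))
        filter_upwards [h2] with k hk
        linarith
      have hBnn : (0:ℝ) ≤ (M + δ) ^ q + (1 - a ^ q) + δ := by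
        have := Real.rpow_nonneg (by linarith : (0:ℝ) ≤ M + δ) q
        linarith
      have hcomb : ∃ᶠ k in atTop,
          ‖u (φ k) + x‖ ≤ ((M + δ) ^ q + (1 - a ^ q) + δ) ^ (1 / q) + ε := by
        refine (hfreq.and_eventually hevB).mono ?_
        rintro k ⟨h1, h2⟩
        have hA : ‖u (φ k) + x‖ ≤ ‖u (φ k) + xJ‖ + ‖x - xJ‖ := by
          have heq : u (φ k) + x = (u (φ k) + xJ) + (x - xJ) := by abel
          rw [heq]
          exact norm_add_le _ _
        have hu1 : ‖u (φ k)‖ ^ q ≤ 1 :=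
          Real.rpow_le_one (norm_nonneg _) (hu _) hq0.le
        have hvy : ‖v (φ k) + y‖ ^ q ≤ (M + δ) ^ q :=
          Real.rpow_le_rpow (norm_nonneg _) h1.le hq0.le
        have hB : ‖u (φ k) + xJ‖ ^ q ≤ (M + δ) ^ q + (1 - a ^ q) + δ := by
          have hk1 := key (φ k)
          linarith
        have hC : ‖u (φ k) + xJ‖ ≤ ((M + δ) ^ q + (1 - a ^ q) + δ) ^ (1 / q) := by
          have h0 : (0:ℝ) ≤ ‖u (φ k) + xJ‖ := norm_nonneg _
          calc ‖u (φ k) + xJ‖ = (‖u (φ k) + xJ‖ ^ q) ^ (1 / q) := by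
                rw [← Real.rpow_mul h0, mul_one_div_cancel hq0.ne', Real.rpow_one]
            _ ≤ ((M + δ) ^ q + (1 - a ^ q) + δ) ^ (1 / q) :=
                Real.rpow_le_rpow (Real.rpow_nonneg h0 q) hB (by positivity)
        linarith
      have hfull : ∃ᶠ n in atTop,
          ‖u n + x‖ ≤ ((M + δ) ^ q + (1 - a ^ q) + δ) ^ (1 / q) + ε := by
        rw [frequently_atTop] at hcomb ⊢
        intro N
        obtain ⟨k, hk, hP⟩ := hcomb N
        exact ⟨φ k, hk.trans hφ.le_apply, hP⟩
      exact liminf_le_of_frequently_le hfull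
        (isBoundedUnder_of ⟨0, fun n => norm_nonneg _⟩)
    -- let δ → 0
    have hδlim : liminf (fun n => ‖u n + x‖) atTop ≤ (M ^ q + (1 - a ^ q)) ^ (1 / q) + ε := by
      have hcont : ContinuousAt
          (fun δ : ℝ => ((M + δ) ^ q + (1 - a ^ q) + δ) ^ (1 / q) + ε) 0 := by
        refine ContinuousAt.add ?_ continuousAt_const
        refine ContinuousAt.rpow_const ?_ (Or.inr (by positivity))
        exact (((continuousAt_const.add continuousAt_id).rpow_const
          (Or.inr hq0.le)).add continuousAt_const).add continuousAt_id
      have htendF : Tendsto (fun δ : ℝ => ((M + δ) ^ q + (1 - a ^ q) + δ) ^ (1 / q) + ε)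
          (𝓝[>] (0:ℝ)) (𝓝 ((M ^ q + (1 - a ^ q)) ^ (1 / q) + ε)) := by
        have h1 := hcont.tendsto
        simp only [add_zero] at h1
        exact h1.mono_left nhdsWithin_le_nhds
      exact ge_of_tendsto htendF
        (eventually_nhdsWithin_of_forall fun δ hδ => hstep δ hδ)
    -- finish with the numeric bound
    have hMc : M ≤ c := hMα.trans (le_max_left _ _)
    have hfin : M ^ q + (1 - a ^ q) ≤ c ^ q + 1 - (c - 1) ^ q :=
      my_case_bound hq1 haI.1 haI.2 hc1 hc2.le hM0 hMa hMc
    have hfin2 : (M ^ q + (1 - a ^ q)) ^ (1 / q) ≤ β := by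
      refine Real.rpow_le_rpow ?_ hfin (by positivity)
      have := Real.rpow_nonneg hM0 q
      linarith
    linarith
  linarith
end

section
/- Let 1 < p < ∞ and let (X_i)_{i∈I} be a family of real Banach spaces each having the Schur property (in particular, this applies to any family of finite-dimensional Banach spaces). Then R([⊕_{i∈I} X_i]_p) < 2. -/
open Filter Topology MeasureTheory
open scoped ENNReal ZeroAtInfty

lemma lp_disjoint_norm {I : Type*} {X : I → Type*} [∀ i, NormedAddCommGroup (X i)]
    {p : ℝ≥0∞} (hq : 0 < p.toReal) (f g : lp X p) (h : ∀ i, f i = 0 ∨ g i = 0) :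
    ‖f + g‖ ^ p.toReal = ‖f‖ ^ p.toReal + ‖g‖ ^ p.toReal := by
  refine (lp.hasSum_norm hq (f + g)).unique ?_
  have h1 := (lp.hasSum_norm hq f).add (lp.hasSum_norm hq g)
  have he : (fun i => ‖(f + g) i‖ ^ p.toReal)
      = fun i => ‖f i‖ ^ p.toReal + ‖g i‖ ^ p.toReal := by
    funext i
    rcases h i with h' | h' <;>
      simp [lp.coeFn_add, h', Real.zero_rpow hq.ne']
  rw [he]
  exact h1

lemma lp_sum_single_apply {I : Type*} [DecidableEq I] {X : I → Type*}
    [∀ i, NormedAddCommGroup (X i)] {p : ℝ≥0∞} (f : ∀ i, X i) (s : Finset I) (j : I) :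
    (∑ i ∈ s, lp.single p i (f i) : lp X p) j = if j ∈ s then f j else 0 := by
  rw [lp.coeFn_sum, Finset.sum_apply]
  simp [lp.coeFn_sum, lp.single_apply, Finset.sum_apply, Finset.sum_dite_eq]


/-- If `1 < p < ∞` and every member of a family of Banach spaces has the Schur property, then
the García-Falset coefficient of their ℓᵖ-sum is `< 2`. -/
theorem statement4 (p : ℝ≥0∞) [Fact (1 ≤ p)] (hp1 : 1 < p) (hp2 : p ≠ ⊤)
    {I : Type*} (X : I → Type*) [∀ i, NormedAddCommGroup (X i)]
    [∀ i, NormedSpace ℝ (X i)] [∀ i, CompleteSpace (X i)]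
    (hSchur : ∀ i, SchurProperty (X i)) :
    garciaFalset (lp X p) < 2 := by
  classical
  have hq1 : 1 < p.toReal := by
    rw [← ENNReal.toReal_one]
    exact (ENNReal.toReal_lt_toReal (by simp) hp2).mpr hp1
  set q := p.toReal with hqdef
  have hq0 : (0 : ℝ) < q := lt_trans one_pos hq1
  have hp0 : p ≠ 0 := by
    intro h; rw [h] at hp1; exact (not_lt_of_ge zero_le) hp1
  set K : ℝ := (2 : ℝ) ^ q⁻¹ with hKdef
  have hK2 : K < 2 := by
    have : (2:ℝ) ^ q⁻¹ < 2 ^ (1:ℝ) :=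
      Real.rpow_lt_rpow_of_exponent_lt one_lt_two (by
        rw [inv_lt_one_iff₀]; right; exact hq1)
    simpa using this
  have hK0 : (0:ℝ) ≤ K := Real.rpow_nonneg (by norm_num) _
  refine lt_of_le_of_lt (Real.sSup_le ?_ hK0) hK2
  rintro a ⟨x, u, hx, hu, hwn, rfl⟩
  -- coordinates of u converge to 0 in norm
  have hcoord : ∀ i, Tendsto (fun n => ‖(u n) i‖) atTop (𝓝 0) := by
    intro i
    apply hSchur i
    intro φ
    let P : lp X p →ₗ[ℝ] X i :=
      { toFun := fun f => f i
        map_add' := fun f g => rfl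
        map_smul' := fun c f => rfl }
    have hP : ∀ f : lp X p, ‖P f‖ ≤ 1 * ‖f‖ := fun f => by
      show ‖f i‖ ≤ 1 * ‖f‖
      simpa using lp.norm_apply_le_norm hp0 f i
    exact hwn (φ.comp (P.mkContinuous 1 hP))
  refine le_of_forall_pos_le_add ?_
  intro ε hε
  -- choose a finite set capturing most of ‖x‖^q
  have hxsum := lp.hasSum_norm hq0 x
  obtain ⟨s, hs⟩ : ∃ s : Finset I, ‖x‖ ^ q - ε ^ q < ∑ i ∈ s, ‖x i‖ ^ q := by
    have hlt : ‖x‖ ^ q - ε ^ q < ‖x‖ ^ q := by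
      have : (0:ℝ) < ε ^ q := Real.rpow_pos_of_pos hε q
      linarith
    exact (hxsum.eventually (eventually_gt_nhds hlt)).exists
  set y : lp X p := ∑ i ∈ s, lp.single p i (x i) with hydef
  set A : ℕ → lp X p := fun n => ∑ i ∈ s, lp.single p i ((u n) i) with hAdef
  -- tail of x is small
  have hz : ‖x - y‖ ≤ ε := by
    have h1 : ‖x - y‖ ^ q = ‖x‖ ^ q - ∑ i ∈ s, ‖x i‖ ^ q :=
      lp.norm_compl_sum_single hq0 x s
    have h2 : ‖x - y‖ ^ q < ε ^ q := by rw [h1]; linarith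
    exact le_of_lt ((Real.rpow_lt_rpow_iff (norm_nonneg _) hε.le hq0).mp h2)
  -- A n → 0 in norm
  have hA0 : Tendsto (fun n => ‖A n‖) atTop (𝓝 0) := by
    have hbd : ∀ n, ‖A n‖ ≤ ∑ i ∈ s, ‖(u n) i‖ := by
      intro n
      refine (norm_sum_le _ _).trans (le_of_eq ?_)
      exact Finset.sum_congr rfl fun i _ => lp.norm_single (pos_iff_ne_zero.mpr hp0) i ((u n) i)
    have hsum0 : Tendsto (fun n => ∑ i ∈ s, ‖(u n) i‖) atTop (𝓝 0) := by
      have := tendsto_finset_sum s (fun i _ => hcoord i)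
      simpa using this
    exact squeeze_zero (fun n => norm_nonneg _) hbd hsum0
  -- the disjointly supported middle part has norm ≤ K
  have hby : ∀ n, ‖(u n - A n) + y‖ ≤ K := by
    intro n
    have hdisj : ∀ i, (u n - A n) i = 0 ∨ y i = 0 := by
      intro i
      by_cases hi : i ∈ s
      · left
        show (u n - ∑ i ∈ s, lp.single p i ((u n) i)) i = 0
        rw [lp.coeFn_sub, Pi.sub_apply, lp_sum_single_apply, if_pos hi, sub_self]
      · right
        show (∑ i ∈ s, lp.single p i (x i) : lp X p) i = 0
        rw [lp_sum_single_apply, if_neg hi]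
    have hsplit := lp_disjoint_norm hq0 (u n - A n) y hdisj
    have hb1 : ‖u n - A n‖ ^ q ≤ 1 := by
      have h1 : ‖u n - A n‖ ^ q = ‖u n‖ ^ q - ∑ i ∈ s, ‖(u n) i‖ ^ q :=
        lp.norm_compl_sum_single hq0 (u n) s
      have h2 : (0:ℝ) ≤ ∑ i ∈ s, ‖(u n) i‖ ^ q :=
        Finset.sum_nonneg fun i _ => Real.rpow_nonneg (norm_nonneg _) _
      have h3 : ‖u n‖ ^ q ≤ 1 := Real.rpow_le_one (norm_nonneg _) (hu n) hq0.le
      linarith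
    have hy1 : ‖y‖ ^ q ≤ 1 := by
      have h1 : ‖y‖ ^ q = ∑ i ∈ s, ‖x i‖ ^ q := lp.norm_sum_single hq0 x s
      have h2 : ∑ i ∈ s, ‖x i‖ ^ q ≤ ‖x‖ ^ q :=
        (Summable.sum_le_tsum s (fun i _ => Real.rpow_nonneg (norm_nonneg _) _)
          hxsum.summable).trans (le_of_eq hxsum.tsum_eq)
      have h3 : ‖x‖ ^ q ≤ 1 := Real.rpow_le_one (norm_nonneg _) hx hq0.le
      linarith
    have h2 : ‖(u n - A n) + y‖ ^ q ≤ 2 := by rw [hsplit]; linarith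
    calc ‖(u n - A n) + y‖ = (‖(u n - A n) + y‖ ^ q) ^ q⁻¹ :=
          (Real.rpow_rpow_inv (norm_nonneg _) hq0.ne').symm
      _ ≤ (2:ℝ) ^ q⁻¹ :=
          Real.rpow_le_rpow (Real.rpow_nonneg (norm_nonneg _) _) h2 (inv_nonneg.mpr hq0.le)
  -- main pointwise inequality
  have hineq : ∀ n, ‖u n + x‖ ≤ ‖A n‖ + (K + ε) := by
    intro n
    have hdecomp : u n + x = A n + ((u n - A n) + y) + (x - y) := by abel
    calc ‖u n + x‖ = ‖A n + ((u n - A n) + y) + (x - y)‖ := by rw [← hdecomp]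
      _ ≤ ‖A n‖ + ‖(u n - A n) + y‖ + ‖x - y‖ := norm_add₃_le
      _ ≤ ‖A n‖ + K + ε := by
          have := hby n
          have := hz
          gcongr
      _ = ‖A n‖ + (K + ε) := by ring
  -- conclude via liminf
  have hco : atTop.IsCoboundedUnder (· ≥ ·) (fun n => ‖A n‖ + (K + ε)) :=
    (hA0.add_const (K + ε)).isBoundedUnder_le.isCoboundedUnder_ge
  have hbdd : atTop.IsBoundedUnder (· ≥ ·) (fun n => ‖u n + x‖) :=
    Filter.isBoundedUnder_of ⟨0, fun n => norm_nonneg _⟩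
  have h1 : liminf (fun n => ‖u n + x‖) atTop ≤ liminf (fun n => ‖A n‖ + (K + ε)) atTop :=
    liminf_le_liminf (Eventually.of_forall hineq) hbdd hco
  have h2 : liminf (fun n => ‖A n‖ + (K + ε)) atTop = K + ε := by
    have : Tendsto (fun n => ‖A n‖ + (K + ε)) atTop (𝓝 (0 + (K + ε))) :=
      hA0.add_const (K + ε)
    rw [zero_add] at this
    exact this.liminf_eq
  rw [h2] at h1
  exact h1
end

section
/- Let N ≥ 2, let 1 ≤ p < ∞, and let I_1, …, I_N be nonempty sets at least one of which is infinite. Then R([⊕_{k=1}^N c0(I_k)]_p) = 2^{1/p}. -/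
open Filter Topology MeasureTheory
open scoped ENNReal ZeroAtInfty

noncomputable section aux
set_option linter.unusedSectionVars false
variable {J : Type*} [TopologicalSpace J] [DiscreteTopology J]

/-- A finitely supported function on a discrete space, as an element of `C₀`. -/
def finSupp (f : J → ℝ) (hf : (Function.support f).Finite) : C₀(J, ℝ) :=
  ⟨⟨f, continuous_of_discreteTopology⟩, by
    rw [cocompact_eq_cofinite]
    exact tendsto_nhds_of_eventually_eq (Filter.eventually_cofinite.mpr hf)⟩

@[simp] lemma finSupp_apply (f : J → ℝ) (hf) (j : J) : finSupp f hf j = f j := rfl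

lemma c0_abs_apply_le_norm (f : C₀(J, ℝ)) (j : J) : |f j| ≤ ‖f‖ := by
  rw [← ZeroAtInftyContinuousMap.norm_toBCF_eq_norm]
  exact f.toBCF.norm_coe_le_norm j

lemma c0_norm_le_of_forall {f : C₀(J, ℝ)} {C : ℝ} (hC : 0 ≤ C) (h : ∀ j, |f j| ≤ C) :
    ‖f‖ ≤ C := by
  rw [← ZeroAtInftyContinuousMap.norm_toBCF_eq_norm]
  exact (BoundedContinuousFunction.norm_le hC).mpr h

/-- Dirac delta in `C₀`. -/
noncomputable def c0delta (j0 : J) : C₀(J, ℝ) :=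
  letI := Classical.decEq J
  finSupp (fun j => if j = j0 then (1:ℝ) else 0)
    (Set.Finite.subset (Set.finite_singleton j0) (by
      intro j hj
      simp only [Function.mem_support, ne_eq, ite_eq_right_iff, not_forall] at hj
      exact hj.1))

lemma c0delta_apply [DecidableEq J] (j0 j : J) :
    c0delta j0 j = if j = j0 then (1:ℝ) else 0 := by
  unfold c0delta; simp only [finSupp_apply]; congr

@[simp] lemma c0delta_norm (j0 : J) : ‖c0delta j0‖ = 1 := by
  classical
  refine le_antisymm (c0_norm_le_of_forall zero_le_one fun j => ?_) ?_
  · rw [c0delta_apply]; split <;> simp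
  · have := c0_abs_apply_le_norm (c0delta j0) j0
    rwa [c0delta_apply, if_pos rfl, abs_one] at this

/-- Evaluation at a point, as a continuous linear functional on `C₀`. -/
def c0eval (j : J) : C₀(J, ℝ) →L[ℝ] ℝ :=
  LinearMap.mkContinuous
    { toFun := fun f => f j
      map_add' := fun f g => rfl
      map_smul' := fun c f => rfl } 1
    (fun f => by simpa using c0_abs_apply_le_norm f j)

@[simp] lemma c0eval_apply (j : J) (f : C₀(J, ℝ)) : c0eval j f = f j := rfl

end aux

section wn
variable {J : Type*} [TopologicalSpace J] [DiscreteTopology J]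

lemma c0delta_weaklyNull (j : ℕ → J) (hj : Function.Injective j)
    (ψ : C₀(J, ℝ) →L[ℝ] ℝ) :
    Tendsto (fun n => ψ (c0delta (j n))) atTop (𝓝 0) := by
  classical
  by_contra h
  rw [Metric.tendsto_atTop] at h
  push_neg at h
  obtain ⟨ε, hε, hfreq⟩ := h
  set T : Set ℕ := {n | ε ≤ |ψ (c0delta (j n))|} with hT
  have hTinf : T.Infinite := by
    refine Set.infinite_of_not_bddAbove ?_
    rintro ⟨b, hb⟩
    obtain ⟨n, hnb, hn⟩ := hfreq (b + 1)
    have : n ∈ T := by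
      rw [hT, Set.mem_setOf_eq]
      simpa [Real.dist_eq] using hn
    exact absurd (hb this) (by omega)
  obtain ⟨m, hm⟩ := exists_nat_gt (‖ψ‖ / ε)
  obtain ⟨S, hST, hScard⟩ := hTinf.exists_subset_card_eq m
  set sgn : ℕ → ℝ := fun n => if 0 ≤ ψ (c0delta (j n)) then 1 else -1 with hsgn
  set g : C₀(J, ℝ) := ∑ n ∈ S, sgn n • c0delta (j n) with hg
  have hψg : ψ g = ∑ n ∈ S, |ψ (c0delta (j n))| := by
    rw [hg, map_sum]
    refine Finset.sum_congr rfl fun n _ => ?_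
    rw [_root_.map_smul, hsgn]
    dsimp only
    split
    · rw [one_smul, abs_of_nonneg ‹_›]
    · rw [neg_smul, one_smul, abs_of_neg (lt_of_not_ge ‹_›)]
  have hψg_ge : (m : ℝ) * ε ≤ ψ g := by
    have h2 := Finset.card_nsmul_le_sum S (fun n => |ψ (c0delta (j n))|) ε
      (fun n hn => hST (Finset.mem_coe.mpr hn))
    rw [nsmul_eq_mul, hScard] at h2
    rw [hψg]; exact h2
  have hgnorm : ‖g‖ ≤ 1 := by
    refine c0_norm_le_of_forall zero_le_one fun i => ?_
    have hgi : g i = ∑ n ∈ S, sgn n * (if i = j n then (1:ℝ) else 0) := by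
      have : c0eval i g = ∑ n ∈ S, c0eval i (sgn n • c0delta (j n)) := by
        rw [hg, map_sum]
      rw [c0eval_apply] at this
      rw [this]
      refine Finset.sum_congr rfl fun n _ => ?_
      rw [_root_.map_smul, c0eval_apply, c0delta_apply, smul_eq_mul]
    by_cases hex : ∃ n ∈ S, j n = i
    · obtain ⟨n0, hn0S, hn0⟩ := hex
      rw [hgi, Finset.sum_eq_single n0]
      · rw [if_pos hn0.symm, mul_one]
        simp only [hsgn]
        split <;> simp
      · intro n hnS hne
        rw [if_neg, mul_zero]
        intro hcon
        exact hne (hj (hn0 ▸ hcon.symm))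
      · intro hn0S'; exact absurd hn0S hn0S'
    · push_neg at hex
      rw [hgi, Finset.sum_eq_zero]
      · simp
      · intro n hnS
        rw [if_neg (fun hcon => hex n hnS hcon.symm), mul_zero]
  have : ψ g ≤ ‖ψ‖ := by
    calc ψ g ≤ |ψ g| := le_abs_self _
    _ ≤ ‖ψ‖ * ‖g‖ := ψ.le_opNorm g
    _ ≤ ‖ψ‖ * 1 := by
        exact mul_le_mul_of_nonneg_left hgnorm (norm_nonneg ψ)
    _ = ‖ψ‖ := mul_one _
  have : (m : ℝ) * ε ≤ ‖ψ‖ := le_trans hψg_ge this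
  rw [div_lt_iff₀ hε] at hm
  linarith

end wn


/-- Coordinate inclusion into a `PiLp` product, as a continuous linear map. -/
noncomputable def piLpSingle (p : ℝ≥0∞) [Fact (1 ≤ p)] {ι : Type*} [Fintype ι] [DecidableEq ι]
    (E : ι → Type*) [∀ i, NormedAddCommGroup (E i)] [∀ i, NormedSpace ℝ (E i)] (k : ι) :
    E k →L[ℝ] PiLp p E :=
  LinearMap.mkContinuous
    (((WithLp.linearEquiv p ℝ (∀ i, E i)).symm.toLinearMap).comp (LinearMap.single ℝ E k)) 1
    (fun v => by
      have : ((WithLp.linearEquiv p ℝ (∀ i, E i)).symm.toLinearMap.comp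
          (LinearMap.single ℝ E k)) v
          = (WithLp.equiv p (∀ i, E i)).symm (Pi.single k v) := rfl
      rw [this, WithLp.equiv_symm_apply, PiLp.norm_toLp_single, one_mul])

lemma piLpSingle_apply (p : ℝ≥0∞) [Fact (1 ≤ p)] {ι : Type*} [Fintype ι] [DecidableEq ι]
    (E : ι → Type*) [∀ i, NormedAddCommGroup (E i)] [∀ i, NormedSpace ℝ (E i)] (k : ι)
    (v : E k) : piLpSingle p E k v = (WithLp.equiv p (∀ i, E i)).symm (Pi.single k v) := rfl

/-- For `N ≥ 2`, `1 ≤ p < ∞` and nonempty discrete sets `I 0, …, I (N-1)` at least one of which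
is infinite, the García-Falset coefficient of `[⊕ₖ c₀(I k)]_p` equals `2^(1/p)`. -/
theorem statement5 (p : ℝ≥0∞) [Fact (1 ≤ p)] (hp : p ≠ ⊤) (N : ℕ) (hN : 2 ≤ N)
    (I : Fin N → Type*) [∀ k, TopologicalSpace (I k)] [∀ k, DiscreteTopology (I k)]
    [∀ k, Nonempty (I k)] (hinf : ∃ k, Infinite (I k)) :
    garciaFalset (PiLp p fun k => C₀(I k, ℝ)) = 2 ^ (1 / p.toReal) := by
  classical
  obtain ⟨k0, hk0⟩ := hinf
  haveI := hk0
  have hpr1 : 1 ≤ p.toReal := by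
    have h1 := ENNReal.toReal_mono hp (Fact.out : (1:ℝ≥0∞) ≤ p)
    simpa using h1
  have hpr0 : 0 < p.toReal := lt_of_lt_of_le one_pos hpr1
  set E : Fin N → Type _ := fun k => C₀(I k, ℝ) with hE
  -- sum of coordinate norms to the p equals norm to the p
  have key : ∀ f : PiLp p E, ∑ k, ‖f k‖ ^ p.toReal = ‖f‖ ^ p.toReal := by
    intro f
    have hnn : (0:ℝ) ≤ ∑ k, ‖f k‖ ^ p.toReal :=
      Finset.sum_nonneg fun k _ => Real.rpow_nonneg (norm_nonneg _) _
    rw [PiLp.norm_eq_sum hpr0, ← Real.rpow_mul hnn, one_div_mul_cancel hpr0.ne',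
      Real.rpow_one]
  -- upper bound
  have hub : ∀ a ∈ { a : ℝ | ∃ (x : PiLp p E) (u : ℕ → PiLp p E), ‖x‖ ≤ 1 ∧
      (∀ n, ‖u n‖ ≤ 1) ∧ WeaklyNull u ∧ a = liminf (fun n => ‖u n + x‖) atTop },
      a ≤ 2 ^ (1 / p.toReal) := by
    rintro a ⟨x, u, hx, hu, hw, rfl⟩
    refine le_of_forall_pos_le_add fun ε hε => ?_
    have hNpos : (0:ℝ) < (N:ℝ) := by
      have : 0 < N := by omega
      exact_mod_cast this
    have hNpow : (0:ℝ) < (N:ℝ) ^ (1 / p.toReal) := Real.rpow_pos_of_pos hNpos _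
    set η : ℝ := ε / ((N:ℝ) ^ (1 / p.toReal)) with hηdef
    have hη0 : 0 < η := div_pos hε hNpow
    -- finite "large value" sets of x
    have hTfin : ∀ k, {j : I k | η ≤ |x k j|}.Finite := by
      intro k
      have hz := (x k).zero_at_infty'
      rw [cocompact_eq_cofinite] at hz
      have h2 := Metric.tendsto_nhds.mp hz η hη0
      rw [Filter.eventually_cofinite] at h2
      refine h2.subset ?_
      intro j hj
      simp only [Set.mem_setOf_eq, Real.dist_eq, sub_zero] at hj ⊢
      exact not_lt.mpr hj
    -- coordinates of u n tend to zero pointwise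
    have hev : ∀ (k) (j : I k), Tendsto (fun n => (u n) k j) atTop (𝓝 0) := by
      intro k j
      have h3 := hw ((c0eval j).comp (PiLp.proj (𝕜 := ℝ) p E k))
      simpa using h3
    have hev2 : ∀ᶠ n in atTop, ∀ k, ∀ j ∈ {j : I k | η ≤ |x k j|}, |(u n) k j| ≤ η := by
      rw [eventually_all]
      intro k
      rw [eventually_all_finite (hTfin k)]
      intro j _
      have h4 := NormedAddCommGroup.tendsto_nhds_zero.mp (hev k j) η hη0
      exact h4.mono fun n hn => le_of_lt (by simpa using hn)
    have hbound : ∀ᶠ n in atTop, ‖u n + x‖ ≤ 2 ^ (1 / p.toReal) + ε := by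
      filter_upwards [hev2] with n hn
      have hcoord : ∀ k, ‖(u n) k + x k‖ ≤ max ‖(u n) k‖ ‖x k‖ + η := by
        intro k
        refine c0_norm_le_of_forall (by positivity) fun j => ?_
        have habs : |((u n) k + x k) j| ≤ |(u n) k j| + |x k j| := by
          rw [ZeroAtInftyContinuousMap.add_apply]
          exact abs_add_le _ _
        by_cases hjT : j ∈ {j : I k | η ≤ |x k j|}
        · have h1 := hn k j hjT
          have h2 := c0_abs_apply_le_norm (x k) j
          calc |((u n) k + x k) j| ≤ |(u n) k j| + |x k j| := habs
          _ ≤ η + ‖x k‖ := add_le_add h1 h2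
          _ ≤ max ‖(u n) k‖ ‖x k‖ + η := by
              rw [add_comm]
              exact add_le_add (le_max_right _ _) le_rfl
        · have h1 : |x k j| ≤ η := le_of_not_ge (by simpa using hjT)
          have h2 := c0_abs_apply_le_norm ((u n) k) j
          calc |((u n) k + x k) j| ≤ |(u n) k j| + |x k j| := habs
          _ ≤ ‖(u n) k‖ + η := add_le_add h2 h1
          _ ≤ max ‖(u n) k‖ ‖x k‖ + η := add_le_add (le_max_left _ _) le_rfl
      set D : PiLp p (fun _ : Fin N => ℝ) :=
        (WithLp.equiv p (Fin N → ℝ)).symm (fun k => max ‖(u n) k‖ ‖x k‖) with hD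
      set Ee : PiLp p (fun _ : Fin N => ℝ) :=
        (WithLp.equiv p (Fin N → ℝ)).symm (fun _ => η) with hEe
      have hDapp : ∀ k, D k = max ‖(u n) k‖ ‖x k‖ := fun k => rfl
      have hEeapp : ∀ k, Ee k = η := fun k => rfl
      have hDnorm : ‖D‖ ≤ 2 ^ (1 / p.toReal) := by
        rw [PiLp.norm_eq_sum hpr0]
        refine Real.rpow_le_rpow (Finset.sum_nonneg fun k _ =>
          Real.rpow_nonneg (norm_nonneg _) _) ?_ (by positivity)
        have hterm : ∀ k : Fin N, ‖D k‖ ^ p.toReal ≤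
            ‖(u n) k‖ ^ p.toReal + ‖x k‖ ^ p.toReal := by
          intro k
          rw [hDapp k, Real.norm_eq_abs,
            abs_of_nonneg (le_max_of_le_left (norm_nonneg _))]
          rcases max_cases ‖(u n) k‖ ‖x k‖ with ⟨hm, _⟩ | ⟨hm, _⟩ <;> rw [hm]
          · exact le_add_of_nonneg_right (Real.rpow_nonneg (norm_nonneg _) _)
          · exact le_add_of_nonneg_left (Real.rpow_nonneg (norm_nonneg _) _)
        calc ∑ k, ‖D k‖ ^ p.toReal
            ≤ ∑ k, (‖(u n) k‖ ^ p.toReal + ‖x k‖ ^ p.toReal) :=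
              Finset.sum_le_sum fun k _ => hterm k
        _ = (∑ k, ‖(u n) k‖ ^ p.toReal) + ∑ k, ‖x k‖ ^ p.toReal := Finset.sum_add_distrib
        _ = ‖u n‖ ^ p.toReal + ‖x‖ ^ p.toReal := by rw [key, key]
        _ ≤ 1 + 1 := add_le_add
              (Real.rpow_le_one (norm_nonneg _) (hu n) hpr0.le)
              (Real.rpow_le_one (norm_nonneg _) hx hpr0.le)
        _ = 2 := by norm_num
      have hEenorm : ‖Ee‖ ≤ ε := by
        rw [PiLp.norm_eq_sum hpr0]
        have : ∑ k : Fin N, ‖Ee k‖ ^ p.toReal = (N:ℝ) * η ^ p.toReal := by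
          simp_rw [hEeapp, Real.norm_eq_abs, abs_of_nonneg hη0.le]
          rw [Finset.sum_const, Finset.card_univ, Fintype.card_fin, nsmul_eq_mul]
        rw [this, Real.mul_rpow hNpos.le (Real.rpow_nonneg hη0.le _),
          ← Real.rpow_mul hη0.le, mul_one_div_cancel hpr0.ne', Real.rpow_one, hηdef,
          mul_div_cancel₀ _ hNpow.ne']
      calc ‖u n + x‖ = (∑ k, ‖(u n + x) k‖ ^ p.toReal) ^ (1 / p.toReal) :=
            PiLp.norm_eq_sum hpr0 _
      _ ≤ (∑ k, ‖D k + Ee k‖ ^ p.toReal) ^ (1 / p.toReal) := by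
          refine Real.rpow_le_rpow (Finset.sum_nonneg fun k _ =>
            Real.rpow_nonneg (norm_nonneg _) _) (Finset.sum_le_sum fun k _ => ?_)
            (by positivity)
          refine Real.rpow_le_rpow (norm_nonneg _) ?_ hpr0.le
          have h5 : (u n + x) k = (u n) k + x k := rfl
          have h6 : D k + Ee k = max ‖(u n) k‖ ‖x k‖ + η := rfl
          rw [h5, h6, Real.norm_eq_abs, abs_of_nonneg (by positivity)]
          exact hcoord k
      _ = ‖D + Ee‖ := by
          rw [PiLp.norm_eq_sum hpr0 (D + Ee)]
          rfl
      _ ≤ ‖D‖ + ‖Ee‖ := norm_add_le _ _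
      _ ≤ 2 ^ (1 / p.toReal) + ε := add_le_add hDnorm hEenorm
    have hbd : IsBoundedUnder (· ≥ ·) atTop (fun n => ‖u n + x‖) :=
      Filter.isBoundedUnder_of ⟨0, fun n => norm_nonneg _⟩
    have hcb : IsCoboundedUnder (· ≥ ·) atTop
        (fun _ : ℕ => (2:ℝ) ^ (1 / p.toReal) + ε) :=
      Filter.isCoboundedUnder_ge_of_le atTop (x := (2:ℝ) ^ (1 / p.toReal) + ε)
        fun _ => le_rfl
    calc liminf (fun n => ‖u n + x‖) atTop
        ≤ liminf (fun _ : ℕ => (2:ℝ) ^ (1 / p.toReal) + ε) atTop :=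
          liminf_le_liminf hbound hbd hcb
    _ = 2 ^ (1 / p.toReal) + ε := liminf_const _
  -- the witness
  have hmem : (2:ℝ) ^ (1 / p.toReal) ∈ { a : ℝ | ∃ (x : PiLp p E) (u : ℕ → PiLp p E),
      ‖x‖ ≤ 1 ∧ (∀ n, ‖u n‖ ≤ 1) ∧ WeaklyNull u ∧
      a = liminf (fun n => ‖u n + x‖) atTop } := by
    have hNT : Nontrivial (Fin N) := by
      refine ⟨⟨0, by omega⟩, ⟨1, by omega⟩, ?_⟩
      simp [Fin.ext_iff]
    obtain ⟨k1, hk1⟩ := exists_ne k0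
    set j : ℕ → I k0 := fun n => Infinite.natEmbedding (I k0) n with hj
    have hjinj : Function.Injective j := (Infinite.natEmbedding (I k0)).injective
    set xw : PiLp p E := piLpSingle p E k1 (c0delta (Classical.arbitrary (I k1))) with hxw
    set uw : ℕ → PiLp p E := fun n => piLpSingle p E k0 (c0delta (j n)) with huw
    have hxnorm : ‖xw‖ = 1 := by
      rw [hxw, piLpSingle_apply, WithLp.equiv_symm_apply, PiLp.norm_toLp_single, c0delta_norm]
    have hunorm : ∀ n, ‖uw n‖ = 1 := by
      intro n
      rw [huw]
      simp only
      rw [piLpSingle_apply, WithLp.equiv_symm_apply, PiLp.norm_toLp_single, c0delta_norm]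
    have hWN : WeaklyNull uw := by
      intro φ
      have := c0delta_weaklyNull j hjinj (φ.comp (piLpSingle p E k0))
      simpa using this
    have hval : ∀ n, ‖uw n + xw‖ = 2 ^ (1 / p.toReal) := by
      intro n
      rw [PiLp.norm_eq_sum hpr0]
      have happ : ∀ k, (uw n + xw) k =
          Pi.single k0 (c0delta (j n)) k +
          Pi.single k1 (c0delta (Classical.arbitrary (I k1))) k := fun k => rfl
      have hzero : ∀ k ∈ Finset.univ, k ∉ ({k0, k1} : Finset (Fin N)) →
          ‖(uw n + xw) k‖ ^ p.toReal = 0 := by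
        intro k _ hk
        simp only [Finset.mem_insert, Finset.mem_singleton, not_or] at hk
        rw [happ k, Pi.single_eq_of_ne hk.1, Pi.single_eq_of_ne hk.2, add_zero,
          norm_zero, Real.zero_rpow hpr0.ne']
      have hsum : ∑ k, ‖(uw n + xw) k‖ ^ p.toReal = 2 := by
        rw [← Finset.sum_subset (Finset.subset_univ ({k0, k1} : Finset (Fin N))) hzero,
          Finset.sum_pair (Ne.symm hk1)]
        rw [happ k0, happ k1, Pi.single_eq_same, Pi.single_eq_same,
          Pi.single_eq_of_ne (Ne.symm hk1), Pi.single_eq_of_ne hk1, add_zero, zero_add,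
          c0delta_norm, c0delta_norm, Real.one_rpow]
        norm_num
      rw [hsum]
    refine ⟨xw, uw, le_of_eq hxnorm, fun n => le_of_eq (hunorm n), hWN, ?_⟩
    have : (fun n => ‖uw n + xw‖) = fun _ : ℕ => (2:ℝ) ^ (1 / p.toReal) :=
      funext fun n => hval n
    rw [this, liminf_const]
  unfold garciaFalset
  exact le_antisymm (csSup_le (Set.nonempty_of_mem hmem) hub)
    (le_csSup ⟨_, hub⟩ hmem)
end

section
/- Let 1 < p < ∞ and let (I_k)_{k∈K} be any family of nonempty sets. Then R([⊕_{k∈K} c0(I_k)]_p) < 2. -/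
open Filter Topology MeasureTheory
open scoped ENNReal ZeroAtInfty

/-- Lipschitz-type bound for `t ↦ t ^ q` on `[0, 3]`. -/
lemma rpow_add_le_aux {q a b : ℝ} (hq : 1 ≤ q) (ha : 0 ≤ a) (hb : 0 ≤ b) (hab : a + b ≤ 3) :
    (a + b) ^ q ≤ a ^ q + 4 ^ q * b := by
  rcases hb.eq_or_lt with rfl | hb'
  · simp [Real.rpow_nonneg]
  · have hcv := (convexOn_rpow hq).slope_mono_adjacent (x := a) (y := a + b) (z := 4)
      (Set.mem_Ici.mpr ha) (Set.mem_Ici.mpr (by norm_num)) (by linarith) (by linarith)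
    simp only [add_sub_cancel_left] at hcv
    have hden : (1 : ℝ) ≤ 4 - (a + b) := by linarith
    have h4 : (0 : ℝ) ≤ (4 : ℝ) ^ q := Real.rpow_nonneg (by norm_num) q
    have habq : (0 : ℝ) ≤ (a + b) ^ q := Real.rpow_nonneg (by linarith) q
    have h2 : ((4 : ℝ) ^ q - (a + b) ^ q) / (4 - (a + b)) ≤ 4 ^ q := by
      rw [div_le_iff₀ (by linarith)]
      nlinarith
    have h3 : ((a + b) ^ q - a ^ q) / b ≤ 4 ^ q := le_trans hcv h2
    rw [div_le_iff₀ hb'] at h3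
    linarith

lemma rpow_max_le_aux {q a b : ℝ} (hq : 0 ≤ q) (ha : 0 ≤ a) (hb : 0 ≤ b) :
    (max a b) ^ q ≤ a ^ q + b ^ q := by
  rcases le_total a b with h | h
  · rw [max_eq_right h]
    have := Real.rpow_nonneg ha q
    linarith
  · rw [max_eq_left h]
    have := Real.rpow_nonneg hb q
    linarith

set_option maxHeartbeats 2000000 in
/-- For `1 < p < ∞` and any family of nonempty discrete sets `(I k)`, the García-Falset
coefficient of the ℓᵖ-sum of the spaces `c₀(I k)` is `< 2`. -/
theorem statement6 (p : ℝ≥0∞) [Fact (1 ≤ p)] (hp1 : 1 < p) (hp2 : p ≠ ⊤)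
    {K : Type*} (I : K → Type*) [∀ k, TopologicalSpace (I k)] [∀ k, DiscreteTopology (I k)]
    [∀ k, Nonempty (I k)] :
    garciaFalset (lp (fun k => C₀(I k, ℝ)) p) < 2 := by
  classical
  have hq1 : 1 < p.toReal := by
    rw [← ENNReal.toReal_one]
    exact (ENNReal.toReal_lt_toReal ENNReal.one_ne_top hp2).mpr hp1
  set q := p.toReal with hqdef
  have hq0 : (0 : ℝ) < q := lt_trans one_pos hq1
  have hp0 : p ≠ 0 := (zero_lt_one.trans hp1).ne'
  have hfin : (0 : ℝ) ≤ (2 : ℝ) ^ (1 / q) := Real.rpow_nonneg (by norm_num) _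
  have hlt : (2 : ℝ) ^ (1 / q) < 2 := by
    nth_rewrite 2 [← Real.rpow_one 2]
    exact Real.rpow_lt_rpow_of_exponent_lt one_lt_two (by rw [div_lt_one hq0]; exact hq1)
  refine lt_of_le_of_lt (Real.sSup_le ?_ hfin) hlt
  rintro a ⟨x, u, hx, hu, hwn, rfl⟩
  -- coordinate evaluations of the weakly null sequence tend to 0
  have hcoord : ∀ (k : K) (i : I k),
      Tendsto (fun n => (u n k) i) atTop (𝓝 0) := by
    intro k i
    let φ : lp (fun k => C₀(I k, ℝ)) p →ₗ[ℝ] ℝ :=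
      { toFun := fun f => (f k) i
        map_add' := fun f g => by
          simp [lp.coeFn_add]
        map_smul' := fun c f => by
          simp [lp.coeFn_smul] }
    have hφ : ∀ f : lp (fun k => C₀(I k, ℝ)) p, ‖φ f‖ ≤ 1 * ‖f‖ := by
      intro f
      calc ‖(f k) i‖ ≤ ‖f k‖ := by
            rw [← ZeroAtInftyContinuousMap.norm_toBCF_eq_norm]
            exact (f k).toBCF.norm_coe_le_norm i
        _ ≤ ‖f‖ := lp.norm_apply_le_norm hp0 f k
        _ = 1 * ‖f‖ := (one_mul _).symm
    exact hwn (φ.mkContinuous 1 hφ)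
  -- the key estimate
  have hmain : ∀ ε : ℝ, 0 < ε → ε ≤ 1 →
      liminf (fun n => ‖u n + x‖) atTop ≤ (2 + ε) ^ (1 / q) + ε := by
    intro ε hε hε1
    -- choose the finite coordinate set F
    have hxsum : HasSum (fun k => ‖x k‖ ^ q) (‖x‖ ^ q) := lp.hasSum_norm hq0 x
    have hεq : (0 : ℝ) < ε ^ q := Real.rpow_pos_of_pos hε q
    obtain ⟨F, hF⟩ : ∃ F : Finset K, ‖x‖ ^ q - ∑ k ∈ F, ‖x k‖ ^ q < ε ^ q := by
      have h := Metric.tendsto_nhds.mp hxsum (ε ^ q) hεq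
      obtain ⟨F, hF⟩ := h.exists
      exact ⟨F, lt_of_le_of_lt (le_abs_self _) (by rwa [Real.dist_eq, abs_sub_comm] at hF)⟩
    set y : lp (fun k => C₀(I k, ℝ)) p := ∑ k ∈ F, lp.single p k (x k) with hy
    have hxy : ‖x - y‖ ≤ ε := by
      rw [← Real.rpow_le_rpow_iff (norm_nonneg _) hε.le hq0]
      rw [hy, lp.norm_compl_sum_single hq0 x F]
      exact hF.le
    have hyF : ∀ k ∈ F, y k = x k := by
      intro k hk
      simp only [hy, lp.coeFn_sum, Finset.sum_apply, lp.single_apply, Finset.sum_dite_eq]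
      simp [hk]
    have hyF' : ∀ k ∉ F, y k = 0 := by
      intro k hk
      simp only [hy, lp.coeFn_sum, Finset.sum_apply, lp.single_apply, Finset.sum_dite_eq]
      simp [hk]
    -- smallness constant
    set c : ℝ := min 1 (ε / ((F.card : ℝ) * 4 ^ q + 1)) with hcdef
    have h4q : (0 : ℝ) < (4 : ℝ) ^ q := Real.rpow_pos_of_pos (by norm_num) q
    have hD : (0 : ℝ) ≤ (F.card : ℝ) * 4 ^ q := by positivity
    have hc0 : 0 < c := lt_min one_pos (div_pos hε (by positivity))
    have hc1 : c ≤ 1 := min_le_left _ _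
    -- inner finite sets
    have hS : ∀ k : K, {i : I k | ¬ ‖(x k) i‖ < c / 2}.Finite := by
      intro k
      have h1 : Tendsto (x k) (Filter.cocompact (I k)) (𝓝 0) := zero_at_infty (x k)
      rw [cocompact_eq_cofinite] at h1
      have h2 : ∀ᶠ i in Filter.cofinite, ‖(x k) i‖ < c / 2 := by
        have := Metric.tendsto_nhds.mp h1 (c / 2) (half_pos hc0)
        filter_upwards [this] with i hi
        rwa [dist_zero_right] at hi
      exact h2
    -- eventual smallness of u on these coordinates
    have hev : ∀ᶠ n in atTop, ∀ k ∈ (F : Set K),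
        ∀ i ∈ {i : I k | ¬ ‖(x k) i‖ < c / 2}, ‖(u n k) i‖ < c / 2 := by
      rw [eventually_all_finite F.finite_toSet]
      intro k _
      rw [eventually_all_finite (hS k)]
      intro i _
      have h1 := Metric.tendsto_nhds.mp (hcoord k i) (c / 2) (half_pos hc0)
      filter_upwards [h1] with n hn
      rwa [dist_zero_right] at hn
    -- eventual norm bound
    have hbnd : ∀ᶠ n in atTop, ‖u n + x‖ ≤ (2 + ε) ^ (1 / q) + ε := by
      filter_upwards [hev] with n hn
      have key : ‖u n + y‖ ≤ (2 + ε) ^ (1 / q) := by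
        apply lp.norm_le_of_forall_sum_le hq0 (Real.rpow_nonneg (by positivity) _)
        intro s
        have hCq : (((2 + ε) ^ (1 / q)) ^ q : ℝ) = 2 + ε := by
          rw [← Real.rpow_mul (by positivity), one_div_mul_cancel hq0.ne', Real.rpow_one]
        rw [hCq]
        have hsplit := Finset.sum_inter_add_sum_sdiff s F
          (fun k => ‖(u n + y) k‖ ^ q)
        rw [← hsplit]
        have hdiff : ∑ k ∈ s \ F, ‖(u n + y) k‖ ^ q = ∑ k ∈ s \ F, ‖u n k‖ ^ q := by
          refine Finset.sum_congr rfl fun k hk => ?_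
          have hkF : k ∉ F := (Finset.mem_sdiff.mp hk).2
          have : (u n + y) k = u n k := by
            rw [lp.coeFn_add, Pi.add_apply, hyF' k hkF, add_zero]
          rw [this]
        have hint : ∀ k ∈ s ∩ F,
            ‖(u n + y) k‖ ^ q ≤ ‖u n k‖ ^ q + (‖x k‖ ^ q + 4 ^ q * c) := by
          intro k hk
          have hkF : k ∈ F := (Finset.mem_inter.mp hk).2
          have h1 : (u n + y) k = u n k + x k := by
            rw [lp.coeFn_add, Pi.add_apply, hyF k hkF]
          have hunk : ‖u n k‖ ≤ 1 := (lp.norm_apply_le_norm hp0 (u n) k).trans (hu n)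
          have hxk : ‖x k‖ ≤ 1 := (lp.norm_apply_le_norm hp0 x k).trans hx
          have h2 : ‖u n k + x k‖ ≤ max ‖u n k‖ ‖x k‖ + c := by
            rw [← ZeroAtInftyContinuousMap.norm_toBCF_eq_norm]
            refine (BoundedContinuousFunction.norm_le (by positivity)).mpr fun i => ?_
            have happ : (u n k + x k).toBCF i = (u n k) i + (x k) i := rfl
            rw [happ]
            by_cases hi : ‖(x k) i‖ < c / 2
            · have hui : ‖(u n k) i‖ ≤ ‖u n k‖ := by
                rw [← ZeroAtInftyContinuousMap.norm_toBCF_eq_norm]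
                exact (u n k).toBCF.norm_coe_le_norm i
              have := norm_add_le ((u n k) i) ((x k) i)
              have hm : ‖u n k‖ ≤ max ‖u n k‖ ‖x k‖ := le_max_left _ _
              linarith
            · have hsmall := hn k hkF i hi
              have hxi : ‖(x k) i‖ ≤ ‖x k‖ := by
                rw [← ZeroAtInftyContinuousMap.norm_toBCF_eq_norm]
                exact (x k).toBCF.norm_coe_le_norm i
              have := norm_add_le ((u n k) i) ((x k) i)
              have hm : ‖x k‖ ≤ max ‖u n k‖ ‖x k‖ := le_max_right _ _
              linarith
          have hmax0 : (0 : ℝ) ≤ max ‖u n k‖ ‖x k‖ := le_trans (norm_nonneg _) (le_max_left _ _)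
          have h3 : max ‖u n k‖ ‖x k‖ + c ≤ 3 := by
            have : max ‖u n k‖ ‖x k‖ ≤ 1 := max_le hunk hxk
            linarith
          calc ‖(u n + y) k‖ ^ q = ‖u n k + x k‖ ^ q := by rw [h1]
            _ ≤ (max ‖u n k‖ ‖x k‖ + c) ^ q :=
                Real.rpow_le_rpow (norm_nonneg _) h2 hq0.le
            _ ≤ (max ‖u n k‖ ‖x k‖) ^ q + 4 ^ q * c :=
                rpow_add_le_aux hq1.le hmax0 hc0.le h3
            _ ≤ ‖u n k‖ ^ q + ‖x k‖ ^ q + 4 ^ q * c := by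
                have := rpow_max_le_aux hq0.le (norm_nonneg (u n k)) (norm_nonneg (x k))
                linarith
            _ = ‖u n k‖ ^ q + (‖x k‖ ^ q + 4 ^ q * c) := by ring
        have hintsum : ∑ k ∈ s ∩ F, ‖(u n + y) k‖ ^ q ≤
            ∑ k ∈ s ∩ F, ‖u n k‖ ^ q + (∑ k ∈ s ∩ F, ‖x k‖ ^ q
              + (s ∩ F).card * (4 ^ q * c)) := by
          have := Finset.sum_le_sum hint
          rw [Finset.sum_add_distrib, Finset.sum_add_distrib, Finset.sum_const,
            nsmul_eq_mul] at this
          linarith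
        have hA : ∑ k ∈ s, ‖u n k‖ ^ q ≤ 1 := by
          refine le_trans (lp.sum_rpow_le_norm_rpow hq0 (u n) s) ?_
          exact Real.rpow_le_one (norm_nonneg _) (hu n) hq0.le
        have hB : ∑ k ∈ s ∩ F, ‖x k‖ ^ q ≤ 1 := by
          refine le_trans (lp.sum_rpow_le_norm_rpow hq0 x (s ∩ F)) ?_
          exact Real.rpow_le_one (norm_nonneg _) hx hq0.le
        have hC : ((s ∩ F).card : ℝ) * (4 ^ q * c) ≤ ε := by
          have hcard : ((s ∩ F).card : ℝ) ≤ (F.card : ℝ) := by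
            exact_mod_cast Finset.card_le_card (Finset.inter_subset_right)
          have h1 : ((s ∩ F).card : ℝ) * (4 ^ q * c) ≤ ((F.card : ℝ) * 4 ^ q) * c := by
            have : (0 : ℝ) ≤ 4 ^ q * c := by positivity
            nlinarith
          have h2 : c ≤ ε / ((F.card : ℝ) * 4 ^ q + 1) := min_le_right _ _
          have h3 : ((F.card : ℝ) * 4 ^ q) * c ≤
              ((F.card : ℝ) * 4 ^ q) * (ε / ((F.card : ℝ) * 4 ^ q + 1)) := by
            exact mul_le_mul_of_nonneg_left h2 hD
          have h4 : ((F.card : ℝ) * 4 ^ q) * (ε / ((F.card : ℝ) * 4 ^ q + 1)) ≤ ε := by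
            rw [mul_div_assoc', div_le_iff₀ (by positivity)]
            nlinarith
          linarith
        have hsum2 : ∑ k ∈ s ∩ F, ‖u n k‖ ^ q + ∑ k ∈ s \ F, ‖u n k‖ ^ q
            = ∑ k ∈ s, ‖u n k‖ ^ q := Finset.sum_inter_add_sum_sdiff s F _
        rw [hdiff]
        linarith
      have hdecomp : u n + x = (u n + y) + (x - y) := by abel
      calc ‖u n + x‖ = ‖(u n + y) + (x - y)‖ := by rw [← hdecomp]
        _ ≤ ‖u n + y‖ + ‖x - y‖ := norm_add_le _ _
        _ ≤ (2 + ε) ^ (1 / q) + ε := add_le_add key hxy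
    refine liminf_le_of_frequently_le hbnd.frequently ?_
    exact isBoundedUnder_of ⟨0, fun n => norm_nonneg _⟩
  -- pass to the limit ε → 0⁺
  have hc : ContinuousAt (fun ε : ℝ => (2 + ε) ^ (1 / q) + ε) 0 := by
    have h1 : ContinuousAt (fun ε : ℝ => 2 + ε) 0 := by fun_prop
    have h2 := (Real.continuousAt_rpow_const (2 + 0) (1 / q) (Or.inl (by norm_num))).comp h1
    exact h2.add continuousAt_id
  have htend : Tendsto (fun ε : ℝ => (2 + ε) ^ (1 / q) + ε) (𝓝[>] (0 : ℝ))
      (𝓝 ((2 : ℝ) ^ (1 / q))) := by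
    have := hc.continuousWithinAt (s := Set.Ioi (0 : ℝ))
    simpa [ContinuousWithinAt] using this
  refine ge_of_tendsto htend ?_
  filter_upwards [Ioc_mem_nhdsGT_of_mem (by norm_num : (0 : ℝ) ∈ Set.Ico (0 : ℝ) 1)] with ε hε
  exact hmain ε hε.1 hε.2
end

section
/- Let N be a strictly monotone, absolute, normalised norm on ℝ^m and let X_1, …, X_m be real Banach spaces each having the Opial property. Then the E-sum [⊕_{i=1}^m X_i]_E has the Opial property; explicitly, whenever for each i = 1,…,m the sequence (x_{n,i})_{n∈ℕ} is weakly null in X_i, and (y_1, …, y_m) with y_i ∈ X_i is not the zero element, then limsup_n N(‖x_{n,1}‖, …, ‖x_{n,m}‖) < limsup_n N(‖x_{n,1} − y_1‖, …, ‖x_{n,m} − y_m‖). -/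
open Filter Topology MeasureTheory
open scoped ENNReal ZeroAtInfty

section auxN
variable {m : ℕ} {N : (Fin m → ℝ) → ℝ}

lemma myN_zero (hhom : ∀ (c : ℝ) (a : Fin m → ℝ), N (c • a) = |c| * N a) : N 0 = 0 := by
  have := hhom 0 0
  simpa using this

lemma myN_le_sum (hadd : ∀ a b : Fin m → ℝ, N (a + b) ≤ N a + N b)
    (hhom : ∀ (c : ℝ) (a : Fin m → ℝ), N (c • a) = |c| * N a)
    (hnormalised : ∀ i, N (Pi.single i 1) = 1) (a : Fin m → ℝ) :
    N a ≤ ∑ i, |a i| := by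
  have key : ∀ s : Finset (Fin m),
      N (∑ i ∈ s, a i • (Pi.single i 1 : Fin m → ℝ)) ≤ ∑ i ∈ s, |a i| := by
    intro s
    induction s using Finset.induction_on with
    | empty => simp [myN_zero hhom]
    | @insert j s' hj ih =>
        rw [Finset.sum_insert hj, Finset.sum_insert hj]
        calc N (a j • (Pi.single j 1 : Fin m → ℝ) + ∑ i ∈ s', a i • (Pi.single i 1 : Fin m → ℝ))
            ≤ N (a j • (Pi.single j 1 : Fin m → ℝ))
              + N (∑ i ∈ s', a i • (Pi.single i 1 : Fin m → ℝ)) := hadd _ _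
          _ ≤ |a j| + ∑ i ∈ s', |a i| := by
              rw [hhom, hnormalised]
              linarith [ih]
  have ha : a = ∑ i, a i • (Pi.single i 1 : Fin m → ℝ) := by
    funext k
    simp [Finset.sum_apply, Pi.single_apply, mul_ite]
  calc N a = N (∑ i, a i • (Pi.single i 1 : Fin m → ℝ)) := by rw [← ha]
    _ ≤ ∑ i, |a i| := key _

lemma myN_tendsto (hadd : ∀ a b : Fin m → ℝ, N (a + b) ≤ N a + N b)
    (hhom : ∀ (c : ℝ) (a : Fin m → ℝ), N (c • a) = |c| * N a)
    (hnormalised : ∀ i, N (Pi.single i 1) = 1)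
    (v : ℕ → Fin m → ℝ) (a : Fin m → ℝ)
    (hv : ∀ i, Tendsto (fun n => v n i) atTop (𝓝 (a i))) :
    Tendsto (fun n => N (v n)) atTop (𝓝 (N a)) := by
  have hbound : ∀ n, |N (v n) - N a| ≤ ∑ i, |v n i - a i| := by
    intro n
    have h1 : N (v n) ≤ N a + N (v n - a) := by
      have := hadd a (v n - a)
      simpa using this
    have h2 : N a ≤ N (v n) + N (v n - a) := by
      have h := hadd (v n) (a - v n)
      have hneg : N (a - v n) = N (v n - a) := by
        have := hhom (-1) (v n - a)
        simp only [neg_one_smul, abs_neg, abs_one, one_mul, neg_sub] at this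
        exact this
      simp only [add_sub_cancel] at h
      linarith
    have h3 : N (v n - a) ≤ ∑ i, |v n i - a i| := by
      have := myN_le_sum hadd hhom hnormalised (v n - a)
      simpa using this
    rw [abs_sub_le_iff]
    constructor <;> linarith
  have hsum : Tendsto (fun n => ∑ i, |v n i - a i|) atTop (𝓝 0) := by
    have : Tendsto (fun n => ∑ i, |v n i - a i|) atTop (𝓝 (∑ i : Fin m, 0)) := by
      apply tendsto_finset_sum
      intro i _
      have h0 : Tendsto (fun n => v n i - a i) atTop (𝓝 (a i - a i)) :=
        (hv i).sub (tendsto_const_nhds (x := a i))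
      have := h0.abs
      simpa using this
    simpa using this
  rw [tendsto_iff_dist_tendsto_zero]
  refine squeeze_zero (fun n => dist_nonneg) (fun n => ?_) hsum
  rw [Real.dist_eq]
  exact hbound n

end auxN

lemma my_exists_subseq_tendsto_limsup (f : ℕ → ℝ)
    (h1 : IsBoundedUnder (· ≤ ·) atTop f) (h2 : IsBoundedUnder (· ≥ ·) atTop f) :
    ∃ φ : ℕ → ℕ, StrictMono φ ∧ Tendsto (f ∘ φ) atTop (𝓝 (limsup f atTop)) := by
  set L := limsup f atTop with hL
  have hfreq : ∀ n : ℕ, ∃ᶠ k in atTop, |f k - L| < 1 / (n + 1 : ℝ) := by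
    intro n
    have hpos : (0:ℝ) < 1 / (n+1 : ℝ) := by positivity
    have hev : ∀ᶠ k in atTop, f k < L + 1/(n+1 : ℝ) :=
      eventually_lt_of_limsup_lt (by linarith) h1
    have hfr : ∃ᶠ k in atTop, L - 1/(n+1 : ℝ) < f k :=
      frequently_lt_of_lt_limsup h2.isCoboundedUnder_le (by linarith)
    refine (hfr.and_eventually hev).mono ?_
    rintro k ⟨hk1, hk2⟩
    rw [abs_lt]
    constructor <;> linarith
  obtain ⟨φ, hmono, hφ⟩ := Filter.extraction_forall_of_frequently hfreq
  refine ⟨φ, hmono, ?_⟩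
  rw [tendsto_iff_dist_tendsto_zero]
  refine squeeze_zero (fun n => dist_nonneg) (fun n => ?_)
    tendsto_one_div_add_atTop_nhds_zero_nat
  rw [Real.dist_eq]
  exact (hφ n).le

lemma my_le_limsup_of_tendsto_subseq {f : ℕ → ℝ} {φ : ℕ → ℕ} (hφ : StrictMono φ) {L : ℝ}
    (hL : Tendsto (f ∘ φ) atTop (𝓝 L)) (h1 : IsBoundedUnder (· ≤ ·) atTop f) :
    L ≤ limsup f atTop := by
  refine le_of_forall_pos_le_add ?_
  intro ε hε
  have hev : ∀ᶠ n in atTop, L - ε ≤ f (φ n) :=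
    (hL.eventually (eventually_ge_nhds (by linarith : L - ε < L)))
  have hfr : ∃ᶠ k in atTop, L - ε ≤ f k :=
    (hφ.tendsto_atTop).frequently hev.frequently
  have := le_limsup_of_frequently_le hfr h1
  linarith


section auxN2
variable {m : ℕ} {N : (Fin m → ℝ) → ℝ}

lemma myN_neg (hhom : ∀ (c : ℝ) (a : Fin m → ℝ), N (c • a) = |c| * N a) (a : Fin m → ℝ) :
    N (-a) = N a := by
  have := hhom (-1) a
  simpa using this

lemma myN_nonneg (hadd : ∀ a b : Fin m → ℝ, N (a + b) ≤ N a + N b)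
    (hhom : ∀ (c : ℝ) (a : Fin m → ℝ), N (c • a) = |c| * N a) (a : Fin m → ℝ) : 0 ≤ N a := by
  have h1 := hadd a (-a)
  rw [add_neg_cancel, myN_zero hhom, myN_neg hhom] at h1
  linarith

end auxN2

section auxN
variable {m : ℕ} {N : (Fin m → ℝ) → ℝ}

lemma myN_update_le (hadd : ∀ a b : Fin m → ℝ, N (a + b) ≤ N a + N b)
    (hhom : ∀ (c : ℝ) (a : Fin m → ℝ), N (c • a) = |c| * N a)
    (habs : ∀ a b : Fin m → ℝ, (∀ i, |a i| = |b i|) → N a = N b)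
    (b : Fin m → ℝ) (j : Fin m) (t : ℝ) (ht : |t| ≤ |b j|) :
    N (Function.update b j t) ≤ N b := by
  by_cases hbj : b j = 0
  · have ht0 : t = 0 := by
      rw [hbj, abs_zero] at ht
      exact abs_eq_zero.mp (le_antisymm ht (abs_nonneg t))
    rw [ht0, ← hbj, Function.update_eq_self]
  · set r : ℝ := t / b j with hr
    have hrabs : |r| ≤ 1 := by
      rw [hr, abs_div]
      exact div_le_one_of_le₀ ht (abs_nonneg _)
    have hr1 : -1 ≤ r := (abs_le.mp hrabs).1
    have hr2 : r ≤ 1 := (abs_le.mp hrabs).2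
    have hdecomp : Function.update b j t
        = ((1+r)/2) • b + ((1-r)/2) • (Function.update b j (-(b j))) := by
      funext k
      by_cases hk : k = j
      · subst hk
        simp only [Function.update_self, Pi.add_apply, Pi.smul_apply, smul_eq_mul]
        field_simp [hr]
        rw [hr]; field_simp [hbj]
        ring
      · simp only [Function.update_of_ne hk, Pi.add_apply, Pi.smul_apply, smul_eq_mul]
        ring
    have hNflip : N (Function.update b j (-(b j))) = N b := by
      apply habs
      intro i
      by_cases hi : i = j
      · subst hi; simp
      · simp [Function.update_of_ne hi]
    calc N (Function.update b j t)
        ≤ N (((1+r)/2) • b) + N (((1-r)/2) • (Function.update b j (-(b j)))) := by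
          rw [hdecomp]; exact hadd _ _
      _ = ((1+r)/2) * N b + ((1-r)/2) * N b := by
          rw [hhom, hhom, hNflip, abs_of_nonneg (by linarith : (0:ℝ) ≤ (1+r)/2),
            abs_of_nonneg (by linarith : (0:ℝ) ≤ (1-r)/2)]
      _ = N b := by ring

lemma myN_mono (hadd : ∀ a b : Fin m → ℝ, N (a + b) ≤ N a + N b)
    (hhom : ∀ (c : ℝ) (a : Fin m → ℝ), N (c • a) = |c| * N a)
    (habs : ∀ a b : Fin m → ℝ, (∀ i, |a i| = |b i|) → N a = N b)
    (a b : Fin m → ℝ) (h : ∀ i, |a i| ≤ |b i|) : N a ≤ N b := by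
  classical
  have key : ∀ s : Finset (Fin m), N (fun i => if i ∈ s then a i else b i) ≤ N b := by
    intro s
    induction s using Finset.induction_on with
    | empty => simp
    | @insert j s' hj ih =>
        have heq : (fun i => if i ∈ insert j s' then a i else b i)
            = Function.update (fun i => if i ∈ s' then a i else b i) j (a j) := by
          funext k
          by_cases hk : k = j
          · subst hk; simp
          · simp [Function.update_of_ne hk, Finset.mem_insert, hk]
        rw [heq]
        refine le_trans (myN_update_le hadd hhom habs _ j (a j) ?_) ih
        simp only [if_neg hj]
        exact h j
  have := key Finset.univ
  simpa using this

lemma my_weaklyNull_bounded {E : Type*} [NormedAddCommGroup E] [NormedSpace ℝ E]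
    (u : ℕ → E) (hu : ∀ φ : E →L[ℝ] ℝ, Tendsto (fun n => φ (u n)) atTop (𝓝 0)) :
    ∃ C : ℝ, ∀ n, ‖u n‖ ≤ C := by
  set g : ℕ → StrongDual ℝ E →L[ℝ] ℝ :=
    fun n => NormedSpace.inclusionInDoubleDual ℝ E (u n) with hg
  have hpt : ∀ φ : StrongDual ℝ E, ∃ C, ∀ n, ‖g n φ‖ ≤ C := by
    intro φ
    have hT : Tendsto (fun n => ‖φ (u n)‖) atTop (𝓝 ‖(0:ℝ)‖) := (hu φ).norm
    have hb : IsBoundedUnder (· ≤ ·) atTop (fun n => ‖φ (u n)‖) := hT.isBoundedUnder_le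
    obtain ⟨C, hC⟩ := hb.bddAbove_range
    refine ⟨C, fun n => ?_⟩
    have : ‖φ (u n)‖ ≤ C := hC (Set.mem_range_self n)
    simpa [hg, NormedSpace.dual_def] using this
  obtain ⟨C', hC'⟩ := banach_steinhaus hpt
  refine ⟨C', fun n => ?_⟩
  have hnorm : ‖g n‖ = ‖u n‖ := (NormedSpace.inclusionInDoubleDualLi ℝ).norm_map (u n)
  rw [← hnorm]
  exact hC' n

/-- If `N` is a strictly monotone absolute normalised norm on `ℝ^m` and `X 1, …, X m` are Banach
spaces with the Opial property, then the `E`-sum has the Opial property, stated explicitly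
in terms of `N` and componentwise weakly null sequences. -/
theorem statement11 (m : ℕ) (N : (Fin m → ℝ) → ℝ)
    (hadd : ∀ a b : Fin m → ℝ, N (a + b) ≤ N a + N b)
    (hhom : ∀ (c : ℝ) (a : Fin m → ℝ), N (c • a) = |c| * N a)
    (hdef : ∀ a : Fin m → ℝ, N a = 0 → a = 0)
    (habs : ∀ a b : Fin m → ℝ, (∀ i, |a i| = |b i|) → N a = N b)
    (hnormalised : ∀ i, N (Pi.single i 1) = 1)
    (hstrictmono : ∀ a b : Fin m → ℝ, N a = N b → (∀ i, |a i| ≤ |b i|) → ∀ i, |a i| = |b i|)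
    (X : Fin m → Type*) [∀ i, NormedAddCommGroup (X i)] [∀ i, NormedSpace ℝ (X i)]
    [∀ i, CompleteSpace (X i)]
    (hOp : ∀ i, ∀ u : ℕ → X i, WeaklyNull u → ∀ z : X i, z ≠ 0 →
      limsup (fun n => ‖u n‖) atTop < limsup (fun n => ‖u n - z‖) atTop)
    (x : ∀ i, ℕ → X i) (hx : ∀ i, WeaklyNull (x i)) (y : ∀ i, X i) (hy : y ≠ 0) :
    limsup (fun n => N fun i => ‖x i n‖) atTop <
      limsup (fun n => N fun i => ‖x i n - y i‖) atTop := by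
  classical
  have hbdd : ∀ i, ∃ C : ℝ, ∀ n, ‖x i n‖ ≤ C := fun i => my_weaklyNull_bounded (x i) (hx i)
  choose C hC using hbdd
  set D : Fin m → ℝ := fun i => C i + ‖y i‖ with hD
  have hCD : ∀ i, C i ≤ D i := fun i => le_add_of_nonneg_right (norm_nonneg _)
  have hDb : ∀ i n, ‖x i n - y i‖ ≤ D i := fun i n =>
    le_trans (norm_sub_le _ _) (add_le_add_left (hC i n) _)
  set f : ℕ → ℝ := fun n => N fun i => ‖x i n‖ with hf
  set g : ℕ → ℝ := fun n => N fun i => ‖x i n - y i‖ with hgdef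
  have hfb : ∀ n, f n ≤ ∑ i, D i := by
    intro n
    refine le_trans (myN_le_sum hadd hhom hnormalised _) (Finset.sum_le_sum fun i _ => ?_)
    rw [abs_of_nonneg (norm_nonneg _)]
    exact le_trans (hC i n) (hCD i)
  have hgb : ∀ n, g n ≤ ∑ i, D i := by
    intro n
    refine le_trans (myN_le_sum hadd hhom hnormalised _) (Finset.sum_le_sum fun i _ => ?_)
    rw [abs_of_nonneg (norm_nonneg _)]
    exact hDb i n
  have hf1 : IsBoundedUnder (· ≤ ·) atTop f := isBoundedUnder_of ⟨∑ i, D i, hfb⟩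
  have hf2 : IsBoundedUnder (· ≥ ·) atTop f :=
    isBoundedUnder_of ⟨0, fun n => myN_nonneg hadd hhom _⟩
  have hg1 : IsBoundedUnder (· ≤ ·) atTop g := isBoundedUnder_of ⟨∑ i, D i, hgb⟩
  obtain ⟨φ₀, hφ₀mono, hφ₀⟩ := my_exists_subseq_tendsto_limsup f hf1 hf2
  set K : Set (Fin m → ℝ × ℝ) := Set.pi Set.univ (fun i => Set.Icc 0 (D i) ×ˢ Set.Icc 0 (D i))
    with hK
  have hKc : IsCompact K := isCompact_univ_pi (fun i => isCompact_Icc.prod isCompact_Icc)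
  set F : ℕ → Fin m → ℝ × ℝ := fun n i => (‖x i (φ₀ n)‖, ‖x i (φ₀ n) - y i‖) with hF
  have hFK : ∀ n, F n ∈ K := by
    intro n
    rw [hK, Set.mem_univ_pi]
    intro i
    refine Set.mem_prod.mpr ⟨⟨norm_nonneg _, le_trans (hC i _) (hCD i)⟩,
      ⟨norm_nonneg _, hDb i _⟩⟩
  obtain ⟨p, hpK, ψ, hψmono, hψ⟩ := hKc.tendsto_subseq hFK
  set a : Fin m → ℝ := fun i => (p i).1 with ha'
  set b : Fin m → ℝ := fun i => (p i).2 with hb'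
  set φ := φ₀ ∘ ψ with hφ
  have hφmono : StrictMono φ := hφ₀mono.comp hψmono
  have ha : ∀ i, Tendsto (fun n => ‖x i (φ n)‖) atTop (𝓝 (a i)) := by
    intro i
    have hcont : Continuous fun q : Fin m → ℝ × ℝ => (q i).1 := (continuous_apply i).fst
    exact (hcont.tendsto p).comp hψ
  have hb : ∀ i, Tendsto (fun n => ‖x i (φ n) - y i‖) atTop (𝓝 (b i)) := by
    intro i
    have hcont : Continuous fun q : Fin m → ℝ × ℝ => (q i).2 := (continuous_apply i).snd
    exact (hcont.tendsto p).comp hψ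
  have hfa : Tendsto (f ∘ φ) atTop (𝓝 (N a)) :=
    myN_tendsto hadd hhom hnormalised (fun n i => ‖x i (φ n)‖) a ha
  have hfφ : Tendsto (f ∘ φ) atTop (𝓝 (limsup f atTop)) := hφ₀.comp hψmono.tendsto_atTop
  have hLa : limsup f atTop = N a := tendsto_nhds_unique hfφ hfa
  have hga : Tendsto (g ∘ φ) atTop (𝓝 (N b)) :=
    myN_tendsto hadd hhom hnormalised (fun n i => ‖x i (φ n) - y i‖) b hb
  have hNb_le : N b ≤ limsup g atTop := my_le_limsup_of_tendsto_subseq hφmono hga hg1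
  have hanonneg : ∀ i, 0 ≤ a i := fun i => ge_of_tendsto' (ha i) (fun n => norm_nonneg _)
  have hbnonneg : ∀ i, 0 ≤ b i := fun i => ge_of_tendsto' (hb i) (fun n => norm_nonneg _)
  have hab : ∀ i, a i ≤ b i ∧ (y i ≠ 0 → a i < b i) := by
    intro i
    by_cases hyi : y i = 0
    · have heq : (fun n => ‖x i (φ n) - y i‖) = fun n => ‖x i (φ n)‖ := by
        funext n; rw [hyi, sub_zero]
      have : b i = a i := tendsto_nhds_unique (heq ▸ hb i) (ha i)
      exact ⟨this.ge, fun h => absurd hyi h⟩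
    · have hwn : ∀ ξ : X i →L[ℝ] ℝ, Tendsto (fun n => ξ (x i (φ n))) atTop (𝓝 0) :=
        fun ξ => (hx i ξ).comp hφmono.tendsto_atTop
      have hlt := hOp i (fun n => x i (φ n)) hwn (y i) hyi
      rw [(ha i).limsup_eq, (hb i).limsup_eq] at hlt
      exact ⟨hlt.le, fun _ => hlt⟩
  obtain ⟨i₀, hi₀⟩ : ∃ i, y i ≠ 0 := Function.ne_iff.mp hy
  have hlt₀ : a i₀ < b i₀ := (hab i₀).2 hi₀
  have habsle : ∀ i, |a i| ≤ |b i| := fun i => by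
    rw [abs_of_nonneg (hanonneg i), abs_of_nonneg (hbnonneg i)]
    exact (hab i).1
  have hNab : N a ≤ N b := myN_mono hadd hhom habs a b habsle
  have hne : N a ≠ N b := by
    intro h
    have := hstrictmono a b h habsle i₀
    rw [abs_of_nonneg (hanonneg i₀), abs_of_nonneg (hbnonneg i₀)] at this
    linarith
  calc limsup f atTop = N a := hLa
    _ < N b := lt_of_le_of_ne hNab hne
    _ ≤ limsup g atTop := hNb_le
end auxN
end
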